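/- arXiv:0709.0897 — 9 statements merged into one kernel-verified Lean document; each statement's English description precedes it below -/
import Mathlib

section
/- Let λ be a partition with r rows and c columns, and set t = r + c. Then the set of first-column hook lengths {h(i,1) : 1 ≤ i ≤ r} together with the set {(t−1) − h(1,j) : 1 ≤ j ≤ c} forms a partition of the set {0, 1, …, t−1} into two disjoint parts whose union is all of {0,…,t−1}. -/
/-- A partition: a weakly decreasing list of positive integers. -/
def IsPartition (l : List ℕ) : Prop :=
  l.Pairwise (· ≥ ·) ∧ ∀ x ∈ l, 0 < x

/-- Hook length of the box in row `i`, column `j` (0-indexed):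
arm (number of boxes strictly to the right) + leg (boxes strictly below) + 1. -/
def hook (l : List ℕ) (i j : ℕ) : ℕ :=
  (l.getD i 0 - j) + ((Finset.range l.length).filter (fun k => i < k ∧ j < l.getD k 0)).card

/-- The multiset of all hook lengths of a partition. -/
def hookMultiset (l : List ℕ) : Multiset ℕ :=
  ↑((List.range l.length).flatMap fun i => (List.range (l.getD i 0)).map fun j => hook l i j)

/-- The set of first-column hook lengths. -/
def firstColHooks (l : List ℕ) : Finset ℕ :=
  (Finset.range l.length).image fun i => hook l i 0

/-- The multiset `{s - t : s ∈ S, t ∈ T, s > t}`. -/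
def posDiffs (S T : Finset ℕ) : Multiset ℕ :=
  ((S ×ˢ T).filter fun q => q.2 < q.1).val.map fun q => q.1 - q.2

/-- The remnant of a partition: the complement in the `r × c` rectangle, rotated 180°. -/
def remnant (l : List ℕ) : List ℕ :=
  ((l.reverse).map fun x => l.headD 0 - x).filter fun x => decide (0 < x)

/-- The front section of the first `p` rows: delete all full-height columns but the rightmost. -/
def frontSection (l : List ℕ) (p : ℕ) : List ℕ :=
  (l.take p).map fun v => v + 1 - l.getD (p - 1) 0

/-- The extension `λ_p - λ_{p+1}` of a partition with respect to period `p`. -/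
def extension (l : List ℕ) (p : ℕ) : ℕ :=
  l.getD (p - 1) 0 - l.getD p 0

/-- The multiset of differences `{c_i - c_j : i < j}` of a (decreasing) list. -/
def listDiffs (ch : List ℕ) : Multiset ℕ :=
  ↑((List.range ch.length).flatMap fun i =>
    ((List.range ch.length).filter fun j => decide (i < j)).map fun j => ch.getD i 0 - ch.getD j 0)

/-- The characteristic of a front section: its first-column hook lengths. -/
def charList (fs : List ℕ) : List ℕ :=
  (List.range fs.length).map fun i => hook fs i 0

/-- The multiset of missing hook numbers of the ∞-partition formed from the top `p` rows. -/
def missingHooks (l : List ℕ) (p : ℕ) : Multiset ℕ :=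
  listDiffs (charList (frontSection l p))

/-- Reconstruct a partition from a `p`-partition datum: front section `fs` atop
remainder `rem`, with extension `x`. -/
def assemble (fs rem : List ℕ) (x : ℕ) : List ℕ :=
  (fs.map fun v => v + (rem.headD 0 + x) - 1) ++ rem

/-- Increment the first `p` parts of `l` by `n`. -/
def bump (l : List ℕ) (p n : ℕ) : List ℕ :=
  ((l.take p).map fun v => v + n) ++ l.drop p

/-- The difference multiset `{a i - a j : 1 ≤ i < j ≤ p}` of a (1-indexed) sequence. -/
def seqDiffs (a : ℕ → ℕ) (p : ℕ) : Multiset ℕ :=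
  ((Finset.Icc 1 p ×ˢ Finset.Icc 1 p).filter fun q => q.1 < q.2).val.map fun q => a q.1 - a q.2

/-- Multiplicity of `m` among the hook lengths of the ∞-partition with front section `f`:
the number of rows `i` containing a box (possibly at a negative column `j`) of hook length `m`. -/
noncomputable def infMult (f : List ℕ) (m : ℕ) : ℕ :=
  Set.ncard {i : ℕ | i < f.length ∧ ∃ j : ℤ, j < (f.getD i 0 : ℤ) ∧
    ((f.getD i 0 : ℤ) - j) +
      (((Finset.range f.length).filter fun k => i < k ∧ j < (f.getD k 0 : ℤ)).card : ℤ) = (m : ℤ)}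

/-- The characteristic set of the enveloping ∞-partition `E∞(λ)`:
`{a + t + 1 : a ∈ A} ∪ {a' + 1 : a' ∈ A'}`. -/
def envChar (l : List ℕ) : Finset ℕ :=
  ((firstColHooks l).image fun a => a + (l.length + l.headD 0) + 1) ∪
  (((Finset.range (l.length + l.headD 0)) \ firstColHooks l).image fun a => a + 1)

/-- The missing-hook-number multiset of `E∞(λ)`: all positive pairwise differences
of the characteristic set. -/
def envMissing (l : List ℕ) : Multiset ℕ := posDiffs (envChar l) (envChar l)

/-- Number of parts of `l` exceeding `j`: the `(j+1)`-st part of the conjugate. -/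
def conjPart (l : List ℕ) (j : ℕ) : ℕ :=
  ((Finset.range l.length).filter fun k => j < l.getD k 0).card

/-- The enveloping partition `E(λ)`: a `t × t` square with the rotated reflection of `λ`
removed from the bottom-right, and copies of `λ` adjoined top-right and bottom-left. -/
def envelope (l : List ℕ) : List ℕ :=
  (l.map fun v => v + (l.length + l.headD 0)) ++
  ((List.range (l.headD 0)).map fun i =>
    (l.length + l.headD 0) - conjPart l (l.headD 0 - 1 - i)) ++ l

/-- Iteratively stack `d` copies of the front section `fs` atop `rem`, with extensions `x i`. -/
def stack (fs rem : List ℕ) (x : ℕ → ℕ) : ℕ → List ℕ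
  | 0 => rem
  | (i + 1) => assemble fs (stack fs rem x i) (x (i + 1))

section aux

variable {l : List ℕ} (hl : IsPartition l)

lemma getD_pos (hk : ∀ x ∈ l, 0 < x) {k : ℕ} (h : k < l.length) : 0 < l.getD k 0 := by
  rw [List.getD_eq_getElem l 0 h]
  exact hk _ (List.getElem_mem h)

lemma sorted_getD (hs : l.Pairwise (· ≥ ·)) {k i : ℕ} (hki : k ≤ i) (hi : i < l.length) :
    l.getD i 0 ≤ l.getD k 0 := by
  rcases eq_or_lt_of_le hki with rfl | hlt
  · exact le_rfl
  · rw [List.getD_eq_getElem l 0 hi, List.getD_eq_getElem l 0 (lt_trans hlt hi)]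
    exact List.pairwise_iff_getElem.1 hs k i _ _ hlt

lemma conj_iff (hs : l.Pairwise (· ≥ ·)) {i : ℕ} (hi : i < l.length) (j : ℕ) :
    j < l.getD i 0 ↔ i < conjPart l j := by
  constructor
  · intro h
    have : Finset.range (i + 1) ⊆
        (Finset.range l.length).filter fun k => j < l.getD k 0 := by
      intro k hk
      simp only [Finset.mem_range] at hk
      simp only [Finset.mem_filter, Finset.mem_range]
      exact ⟨lt_of_lt_of_le hk hi, lt_of_lt_of_le h (sorted_getD hs (Nat.lt_succ_iff.1 hk) hi)⟩
    have := Finset.card_le_card this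
    simpa [conjPart] using this
  · intro h
    by_contra hc
    push_neg at hc
    have : ((Finset.range l.length).filter fun k => j < l.getD k 0) ⊆ Finset.range i := by
      intro k hk
      simp only [Finset.mem_filter, Finset.mem_range] at hk ⊢
      by_contra hki
      push_neg at hki
      exact absurd (lt_of_lt_of_le hk.2 (sorted_getD hs hki hk.1)) (not_lt.2 hc)
    have := Finset.card_le_card this
    simp only [Finset.card_range] at this
    unfold conjPart at h
    omega

lemma conjPart_le : conjPart l j ≤ l.length := by
  simpa [conjPart] using Finset.card_le_card (Finset.filter_subset _ (Finset.range l.length))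

lemma conjPart_anti {j j' : ℕ} (h : j ≤ j') : conjPart l j' ≤ conjPart l j := by
  apply Finset.card_le_card
  intro k hk
  simp only [Finset.mem_filter, Finset.mem_range] at hk ⊢
  omega

lemma hookCol (hk : ∀ x ∈ l, 0 < x) {i : ℕ} (hi : i < l.length) :
    hook l i 0 + i + 1 = l.getD i 0 + l.length := by
  have h1 : ((Finset.range l.length).filter fun k => i < k ∧ 0 < l.getD k 0)
      = Finset.Ico (i + 1) l.length := by
    ext k
    simp only [Finset.mem_filter, Finset.mem_range, Finset.mem_Ico]
    constructor
    · rintro ⟨h, h2, _⟩; omega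
    · intro h
      exact ⟨h.2, by omega, getD_pos hk h.2⟩
  have h2 : 0 < l.getD i 0 := getD_pos hk hi
  simp only [hook, h1, Nat.card_Ico, Nat.sub_zero]
  omega

lemma hookRow (hl : IsPartition l) (hne : l ≠ []) {j : ℕ} (hj : j < l.headD 0) :
    hook l 0 j + j + 1 = l.headD 0 + conjPart l j := by
  have hlen : 0 < l.length := List.length_pos_iff.2 hne
  have hhead : l.headD 0 = l.getD 0 0 := by
    cases l with
    | nil => simp at hne
    | cons a t => simp
  have h0mem : (0 : ℕ) ∈ (Finset.range l.length).filter fun k => j < l.getD k 0 := by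
    simp only [Finset.mem_filter, Finset.mem_range]
    exact ⟨hlen, by rw [← hhead]; exact hj⟩
  have h1 : ((Finset.range l.length).filter fun k => 0 < k ∧ j < l.getD k 0)
      = ((Finset.range l.length).filter fun k => j < l.getD k 0).erase 0 := by
    ext k
    simp only [Finset.mem_filter, Finset.mem_range, Finset.mem_erase]
    constructor
    · rintro ⟨h, h2, h3⟩; exact ⟨by omega, h, h3⟩
    · rintro ⟨h, h2, h3⟩; exact ⟨h2, by omega, h3⟩
  have h2 := Finset.card_erase_of_mem h0mem
  have h3 : 0 < conjPart l j := Finset.card_pos.2 ⟨0, h0mem⟩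
  simp only [hook, h1, h2]
  rw [← hhead]
  unfold conjPart at h3 ⊢
  omega

end aux

/-- The first-column hooks together with `{(t-1) - h(1,j)}` partition `{0,…,t-1}`. -/
theorem stmt2 (l : List ℕ) (hl : IsPartition l) (hne : l ≠ []) :
    Disjoint (firstColHooks l)
        ((Finset.range (l.headD 0)).image fun j => (l.length + l.headD 0 - 1) - hook l 0 j) ∧
      firstColHooks l ∪
        ((Finset.range (l.headD 0)).image fun j => (l.length + l.headD 0 - 1) - hook l 0 j)
      = Finset.range (l.length + l.headD 0) := by
  obtain ⟨hs, hp⟩ := hl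
  have hlen : 0 < l.length := List.length_pos_iff.2 hne
  have hhead : l.headD 0 = l.getD 0 0 := by
    cases l with
    | nil => simp at hne
    | cons a t => simp
  have hd : Disjoint (firstColHooks l)
      ((Finset.range (l.headD 0)).image fun j => (l.length + l.headD 0 - 1) - hook l 0 j) := by
    rw [Finset.disjoint_left]
    intro n hA hB
    simp only [firstColHooks, Finset.mem_image, Finset.mem_range] at hA hB
    obtain ⟨i, hi, hieq⟩ := hA
    obtain ⟨j, hj, hjeq⟩ := hB
    have h1 := hookCol hp hi
    have h2 := hookRow ⟨hs, hp⟩ hne hj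
    have h3 := conj_iff hs hi j
    have h4 : conjPart l j ≤ l.length := conjPart_le
    omega
  refine ⟨hd, ?_⟩
  have cardA : (firstColHooks l).card = l.length := by
    rw [firstColHooks, Finset.card_image_of_injOn, Finset.card_range]
    intro i hi i' hi' heq
    simp only [Finset.coe_range, Set.mem_Iio] at hi hi'
    have heq' : hook l i 0 = hook l i' 0 := heq
    have h1 := hookCol hp hi
    have h2 := hookCol hp hi'
    rcases lt_trichotomy i i' with h | h | h
    · have := sorted_getD hs (le_of_lt h) hi'
      omega
    · exact h
    · have := sorted_getD hs (le_of_lt h) hi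
      omega
  have cardB : ((Finset.range (l.headD 0)).image
      fun j => (l.length + l.headD 0 - 1) - hook l 0 j).card = l.headD 0 := by
    rw [Finset.card_image_of_injOn, Finset.card_range]
    intro j hj j' hj' heq
    simp only [Finset.coe_range, Set.mem_Iio] at hj hj'
    have heq' : l.length + l.headD 0 - 1 - hook l 0 j
        = l.length + l.headD 0 - 1 - hook l 0 j' := heq
    have h1 := hookRow ⟨hs, hp⟩ hne hj
    have h2 := hookRow ⟨hs, hp⟩ hne hj'
    have h4 : conjPart l j ≤ l.length := conjPart_le
    have h5 : conjPart l j' ≤ l.length := conjPart_le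
    rcases lt_trichotomy j j' with h | h | h
    · have : conjPart l j' ≤ conjPart l j := conjPart_anti (le_of_lt h)
      omega
    · exact h
    · have : conjPart l j ≤ conjPart l j' := conjPart_anti (le_of_lt h)
      omega
  have hsub : firstColHooks l ∪
      ((Finset.range (l.headD 0)).image fun j => (l.length + l.headD 0 - 1) - hook l 0 j)
      ⊆ Finset.range (l.length + l.headD 0) := by
    apply Finset.union_subset
    · intro n hA
      simp only [firstColHooks, Finset.mem_image, Finset.mem_range] at hA ⊢
      obtain ⟨i, hi, rfl⟩ := hA
      have h1 := hookCol hp hi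
      have h2 := sorted_getD hs (Nat.zero_le i) hi
      omega
    · intro n hB
      simp only [Finset.mem_image, Finset.mem_range] at hB ⊢
      obtain ⟨j, hj, rfl⟩ := hB
      omega
  have hcard : (firstColHooks l ∪
      ((Finset.range (l.headD 0)).image fun j => (l.length + l.headD 0 - 1) - hook l 0 j)).card
      = l.length + l.headD 0 := by
    rw [Finset.card_union_of_disjoint hd, cardA, cardB]
  exact Finset.eq_of_subset_of_card_le hsub (by rw [hcard, Finset.card_range])
end

section
/- Let λ be a partition with r rows and c columns, t = r + c, A the set of first-column hook lengths of λ, and A′ the complement of A in {0,1,…,t−1}. Then the multiset of all hook lengths of λ equals the multiset {a − a′ : a ∈ A, a′ ∈ A′, a > a′}. -/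
theorem myfilter_bind {α β : Type} (s : Multiset α) (f : α → Multiset β) (p : β → Prop)
    [DecidablePred p] : (s.bind f).filter p = s.bind (fun a => (f a).filter p) := by
  induction s using Multiset.induction with
  | empty => simp
  | cons a s ih => simp [Multiset.filter_add, ih]

theorem posDiffs_eq (S T : Finset ℕ) :
    posDiffs S T = S.val.bind (fun s => ((T.filter (· < s)).val.map (s - ·))) := by
  unfold posDiffs
  rw [Finset.filter_val, Finset.product_val]
  simp only [SProd.sprod, Multiset.product]
  rw [myfilter_bind, Multiset.map_bind]
  apply Multiset.bind_congr
  intro s _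
  rw [Multiset.filter_map, Finset.filter_val, Multiset.map_map]
  rfl
theorem part_pos (l : List ℕ) (hl : IsPartition l) {i : ℕ} (hi : i < l.length) :
    0 < l.getD i 0 := by
  apply hl.2
  rw [List.getD_eq_getElem _ _ hi]
  exact List.getElem_mem hi

theorem part_le (l : List ℕ) (hl : IsPartition l) {i m : ℕ} (him : i ≤ m) (hm : m < l.length) :
    l.getD m 0 ≤ l.getD i 0 := by
  rcases eq_or_lt_of_le him with rfl | h
  · exact le_refl _
  · have := List.pairwise_iff_get.mp hl.1 ⟨i, lt_trans h hm⟩ ⟨m, hm⟩ h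
    rw [List.getD_eq_getElem _ _ hm, List.getD_eq_getElem _ _ (h.trans hm)]
    simpa using this

theorem hook0_eq (l : List ℕ) (hl : IsPartition l) {i : ℕ} (hi : i < l.length) :
    hook l i 0 = l.getD i 0 + (l.length - i - 1) := by
  unfold hook
  rw [Nat.sub_zero]
  congr 1
  have : (Finset.range l.length).filter (fun k => i < k ∧ 0 < l.getD k 0)
      = Finset.Ico (i + 1) l.length := by
    ext k
    simp only [Finset.mem_filter, Finset.mem_range, Finset.mem_Ico]
    constructor
    · rintro ⟨h1, h2, h3⟩; omega
    · rintro ⟨h1, h2⟩; exact ⟨h2, by omega, part_pos l hl h2⟩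
  rw [this, Nat.card_Ico]
  omega

theorem hook_le_hook0 (l : List ℕ) {i j : ℕ} :
    hook l i j ≤ hook l i 0 := by
  unfold hook
  have hc : ((Finset.range l.length).filter (fun k => i < k ∧ j < l.getD k 0)).card
      ≤ ((Finset.range l.length).filter (fun k => i < k ∧ 0 < l.getD k 0)).card := by
    apply Finset.card_le_card
    intro k hk
    simp only [Finset.mem_filter, Finset.mem_range] at hk ⊢
    exact ⟨hk.1, hk.2.1, by omega⟩
  omega

theorem hook_pos (l : List ℕ) {i j : ℕ} (hj : j < l.getD i 0) : 0 < hook l i j := by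
  unfold hook; omega

theorem hook_anti (l : List ℕ) {i j1 j2 : ℕ} (h12 : j1 < j2) (hj : j2 < l.getD i 0) :
    hook l i j2 < hook l i j1 := by
  unfold hook
  have hc : ((Finset.range l.length).filter (fun k => i < k ∧ j2 < l.getD k 0)).card
      ≤ ((Finset.range l.length).filter (fun k => i < k ∧ j1 < l.getD k 0)).card := by
    apply Finset.card_le_card
    intro k hk
    simp only [Finset.mem_filter, Finset.mem_range] at hk ⊢
    exact ⟨hk.1, hk.2.1, by omega⟩
  omega

theorem a_lt (l : List ℕ) (hl : IsPartition l) {i m : ℕ} (him : i < m) (hm : m < l.length) :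
    hook l m 0 < hook l i 0 := by
  rw [hook0_eq l hl hm, hook0_eq l hl (him.trans hm)]
  have := part_le l hl him.le hm
  omega

theorem a_le (l : List ℕ) (hl : IsPartition l) {i m : ℕ} (him : m ≤ i) (hi : i < l.length) :
    hook l i 0 ≤ hook l m 0 := by
  rcases eq_or_lt_of_le him with rfl | h
  · exact le_refl _
  · exact (a_lt l hl h hi).le
theorem notA (l : List ℕ) (hl : IsPartition l) {i j m : ℕ} (hi : i < l.length)
    (hj : j < l.getD i 0) (hm : m < l.length) :
    hook l i 0 - hook l i j ≠ hook l m 0 := by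
  intro heq
  have hle : hook l i j ≤ hook l i 0 := hook_le_hook0 l
  have hpos : 0 < hook l i j := hook_pos l hj
  have key : hook l m 0 + hook l i j = hook l i 0 := by omega
  by_cases him : i < m
  · set c := ((Finset.range l.length).filter (fun k => i < k ∧ j < l.getD k 0)).card with hc
    have hexp : hook l i j = (l.getD i 0 - j) + c := rfl
    have hi0 := hook0_eq l hl hi
    have hm0 := hook0_eq l hl hm
    by_cases hjm : j < l.getD m 0
    · have hsub : Finset.Ioc i m ⊆
          (Finset.range l.length).filter (fun k => i < k ∧ j < l.getD k 0) := by
        intro k hk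
        simp only [Finset.mem_Ioc] at hk
        simp only [Finset.mem_filter, Finset.mem_range]
        have := part_le l hl hk.2 hm
        exact ⟨by omega, hk.1, by omega⟩
      have hcge : m - i ≤ c := by
        have := Finset.card_le_card hsub
        rwa [Nat.card_Ioc] at this
      omega
    · have hsub : (Finset.range l.length).filter (fun k => i < k ∧ j < l.getD k 0) ⊆
          Finset.Ioo i m := by
        intro k hk
        simp only [Finset.mem_filter, Finset.mem_range] at hk
        simp only [Finset.mem_Ioo]
        refine ⟨hk.2.1, ?_⟩
        by_contra hkm
        have := part_le l hl (by omega : m ≤ k) hk.1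
        omega
      have hcle : c ≤ m - i - 1 := by
        have := Finset.card_le_card hsub
        rwa [Nat.card_Ioo] at this
      omega
  · have := a_le l hl (by omega : m ≤ i) hi
    omega

theorem head_eq (l : List ℕ) (hne : l ≠ []) : l.headD 0 = l.getD 0 0 := by
  cases l with
  | nil => simp at hne
  | cons a t => simp

theorem a_lt_t (l : List ℕ) (hl : IsPartition l) (hne : l ≠ []) {i : ℕ} (hi : i < l.length) :
    hook l i 0 < l.length + l.headD 0 := by
  rw [hook0_eq l hl hi, head_eq l hne]
  have := part_le l hl (Nat.zero_le i) hi
  omega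

theorem filter_lt_range (r i : ℕ) :
    ((Finset.range r).filter (fun m => i < m)).card = r - i - 1 := by
  have : (Finset.range r).filter (fun m => i < m) = Finset.Ico (i + 1) r := by
    ext k
    simp only [Finset.mem_filter, Finset.mem_range, Finset.mem_Ico]
    omega
  rw [this, Nat.card_Ico]
  omega

theorem Acard (l : List ℕ) (hl : IsPartition l) (hne : l ≠ []) {i : ℕ} (hi : i < l.length) :
    ((Finset.range (l.length + l.headD 0) \ firstColHooks l).filter
      (· < hook l i 0)).card = l.getD i 0 := by
  have ht := a_lt_t l hl hne hi
  have hstep : (Finset.range (l.length + l.headD 0) \ firstColHooks l).filter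
      (· < hook l i 0) = Finset.range (hook l i 0) \ (firstColHooks l).filter (· < hook l i 0) := by
    ext x
    simp only [Finset.mem_filter, Finset.mem_sdiff, Finset.mem_range]
    constructor
    · rintro ⟨⟨h1, h2⟩, h3⟩; exact ⟨h3, fun hx => h2 hx.1⟩
    · rintro ⟨h1, h2⟩; exact ⟨⟨by omega, fun hx => h2 ⟨hx, h1⟩⟩, h1⟩
  have hAf : (firstColHooks l).filter (· < hook l i 0)
      = ((Finset.range l.length).filter (fun m => i < m)).image (fun m => hook l m 0) := by
    ext x
    simp only [firstColHooks, Finset.mem_filter, Finset.mem_image, Finset.mem_range]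
    constructor
    · rintro ⟨⟨m, hm, rfl⟩, hlt⟩
      refine ⟨m, ⟨hm, ?_⟩, rfl⟩
      by_contra him
      have := a_le l hl (by omega : m ≤ i) hi
      omega
    · rintro ⟨m, ⟨hm, him⟩, rfl⟩
      exact ⟨⟨m, hm, rfl⟩, a_lt l hl him hm⟩
  have hinj : Set.InjOn (fun m => hook l m 0)
      ↑((Finset.range l.length).filter (fun m => i < m)) := by
    intro x hx y hy hxy
    simp only [Finset.coe_filter, Set.mem_setOf_eq, Finset.mem_range] at hx hy
    rcases lt_trichotomy x y with h | h | h
    · exact absurd hxy (a_lt l hl h hy.1).ne'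
    · exact h
    · exact absurd hxy (a_lt l hl h hx.1).ne
  have hsub2 : (firstColHooks l).filter (· < hook l i 0) ⊆ Finset.range (hook l i 0) := by
    intro x hx
    simp only [Finset.mem_filter] at hx
    simp only [Finset.mem_range]
    exact hx.2
  rw [hstep, Finset.card_sdiff_of_subset hsub2, hAf, Finset.card_image_of_injOn hinj, filter_lt_range,
    Finset.card_range, hook0_eq l hl hi]
  omega
theorem a_injOn (l : List ℕ) (hl : IsPartition l) {x y : ℕ} (hx : x < l.length)
    (hy : y < l.length) (hxy : hook l x 0 = hook l y 0) : x = y := by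
  rcases lt_trichotomy x y with h | h | h
  · exact absurd hxy (a_lt l hl h hy).ne'
  · exact h
  · exact absurd hxy (a_lt l hl h hx).ne

theorem rowEq (l : List ℕ) (hl : IsPartition l) (hne : l ≠ []) {i : ℕ} (hi : i < l.length) :
    Multiset.map (hook l i) (Multiset.range (l.getD i 0))
      = (((Finset.range (l.length + l.headD 0) \ firstColHooks l).filter
          (· < hook l i 0)).val.map (hook l i 0 - ·)) := by
  set S := (Finset.range (l.length + l.headD 0) \ firstColHooks l).filter
    (· < hook l i 0) with hS
  have hmem : ∀ j < l.getD i 0, hook l i 0 - hook l i j ∈ S := by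
    intro j hj
    have h1 : 0 < hook l i j := hook_pos l hj
    have h2 : hook l i j ≤ hook l i 0 := hook_le_hook0 l
    have h3 := a_lt_t l hl hne hi
    simp only [hS, Finset.mem_filter, Finset.mem_sdiff, Finset.mem_range]
    refine ⟨⟨by omega, ?_⟩, by omega⟩
    intro hA
    simp only [firstColHooks, Finset.mem_image, Finset.mem_range] at hA
    obtain ⟨m, hm, hmeq⟩ := hA
    exact notA l hl hi hj hm hmeq.symm
  have hinjφ : ∀ j1 < l.getD i 0, ∀ j2 < l.getD i 0,
      hook l i 0 - hook l i j1 = hook l i 0 - hook l i j2 → j1 = j2 := by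
    intro j1 h1 j2 h2 heq
    rcases lt_trichotomy j1 j2 with h | h | h
    · have := hook_anti l h h2
      have l1 : hook l i j1 ≤ hook l i 0 := hook_le_hook0 l
      omega
    · exact h
    · have := hook_anti l h h1
      have l1 : hook l i j2 ≤ hook l i 0 := hook_le_hook0 l
      omega
  have himg : (Finset.range (l.getD i 0)).image (fun j => hook l i 0 - hook l i j) = S := by
    apply Finset.eq_of_subset_of_card_le
    · intro x hx
      simp only [Finset.mem_image, Finset.mem_range] at hx
      obtain ⟨j, hj, rfl⟩ := hx
      exact hmem j hj
    · rw [Finset.card_image_of_injOn (fun x hx y hy =>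
        hinjφ x (Finset.mem_range.mp hx) y (Finset.mem_range.mp hy))]
      rw [Finset.card_range, hS, Acard l hl hne hi]
  have hval : (Multiset.range (l.getD i 0)).map (fun j => hook l i 0 - hook l i j) = S.val := by
    rw [← himg, Finset.image_val, Finset.range_val, Multiset.dedup_eq_self.mpr]
    exact Multiset.Nodup.map_on
      (fun x hx y hy => hinjφ x (Multiset.mem_range.mp hx) y (Multiset.mem_range.mp hy))
      (Multiset.nodup_range _)
  rw [← hval, Multiset.map_map]
  apply Multiset.map_congr rfl
  intro j hj
  have h2 : hook l i j ≤ hook l i 0 := hook_le_hook0 l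
  simp only [Function.comp_apply]
  omega

/-- `H(λ) = {a - a' : a ∈ A, a' ∈ A', a > a'}`. -/
theorem stmt3 (l : List ℕ) (hl : IsPartition l) (hne : l ≠ []) :
    hookMultiset l
      = posDiffs (firstColHooks l)
          (Finset.range (l.length + l.headD 0) \ firstColHooks l) := by
  rw [posDiffs_eq]
  have hAval : (firstColHooks l).val
      = (Multiset.range l.length).map (fun m => hook l m 0) := by
    rw [firstColHooks, Finset.image_val, Finset.range_val, Multiset.dedup_eq_self.mpr]
    exact Multiset.Nodup.map_on
      (fun x hx y hy => a_injOn l hl (Multiset.mem_range.mp hx) (Multiset.mem_range.mp hy))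
      (Multiset.nodup_range _)
  rw [hAval, Multiset.bind_map]
  rw [hookMultiset, ← Multiset.coe_bind, Multiset.coe_range]
  apply Multiset.bind_congr
  intro i hi
  rw [← Multiset.map_coe, Multiset.coe_range]
  exact rowEq l hl hne (Multiset.mem_range.mp hi)
end

section
/- Let λ be a partition with r rows and c columns, t = r + c, A its set of first-column hook lengths, A′ the complement of A in {0,…,t−1}, and let λ̃ denote the remnant of λ, i.e., the partition (c − λ_r, c − λ_{r−1}, …, c − λ_1) with zero parts removed. Then the multiset of hook lengths of λ̃ equals {a′ − a : a′ ∈ A′, a ∈ A, a′ > a}. -/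
namespace Stmt4Aux

lemma mfilter_bind {A B : Type} (p : B -> Prop) [DecidablePred p] (s : Multiset A)
    (f : A -> Multiset B) :
    Multiset.filter p (s.bind f) = s.bind fun a => (f a).filter p := by
  induction s using Multiset.induction_on with
  | empty => simp
  | cons a s ih => simp [ih]

lemma getD_anti (l : List ℕ) (hl : l.Pairwise (· ≥ ·)) {i j : ℕ} (hij : i ≤ j) :
    l.getD j 0 ≤ l.getD i 0 := by
  rcases lt_or_ge j l.length with hj | hj
  · have hi : i < l.length := lt_of_le_of_lt hij hj
    rw [List.getD_eq_getElem l 0 hj, List.getD_eq_getElem l 0 hi]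
    rcases eq_or_lt_of_le hij with rfl | h
    · exact le_refl _
    · exact hl.rel_get_of_lt (a := ⟨i, hi⟩) (b := ⟨j, hj⟩) h
  · rw [List.getD_eq_default l 0 hj]; exact Nat.zero_le _

lemma getD_pos (l : List ℕ) (hpos : ∀ x ∈ l, 0 < x) {i : ℕ} (hi : i < l.length) :
    0 < l.getD i 0 := by
  rw [List.getD_eq_getElem l 0 hi]
  exact hpos _ (l.getElem_mem hi)

lemma getD_le_head (l : List ℕ) (hl : l.Pairwise (· ≥ ·)) (i : ℕ) :
    l.getD i 0 ≤ l.headD 0 := by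
  have : l.headD 0 = l.getD 0 0 := by cases l <;> simp
  rw [this]
  exact getD_anti l hl (Nat.zero_le i)

lemma card_filter_lt (r i : ℕ) : ((Finset.range r).filter fun k => i < k).card = r - 1 - i := by
  have : (Finset.range r).filter (fun k => i < k) = Finset.Ioo i r := by
    ext k; simp [Finset.mem_Ioo]; omega
  rw [this, Nat.card_Ioo]; omega

lemma hook0 (l : List ℕ) (hpos : ∀ x ∈ l, 0 < x) {i : ℕ} (hi : i < l.length) :
    hook l i 0 = l.getD i 0 + (l.length - 1 - i) := by
  unfold hook
  have h1 : (Finset.range l.length).filter (fun k => i < k ∧ 0 < l.getD k 0)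
      = (Finset.range l.length).filter (fun k => i < k) := by
    apply Finset.filter_congr
    intro k hk
    simp only [Finset.mem_range] at hk
    simp only [iff_self_and, and_iff_left_iff_imp]
    intro _
    exact getD_pos l hpos hk
  rw [h1, card_filter_lt]
  omega

lemma hook0_strict_anti (l : List ℕ) (hl : l.Pairwise (· ≥ ·)) (hpos : ∀ x ∈ l, 0 < x) {i j : ℕ}
    (hij : i < j) (hj : j < l.length) : hook l j 0 < hook l i 0 := by
  have hi : i < l.length := lt_trans hij hj
  rw [hook0 l hpos hi, hook0 l hpos hj]
  have := getD_anti l hl (le_of_lt hij)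
  omega

lemma hook0_lt_t (l : List ℕ) (hl : l.Pairwise (· ≥ ·)) (hpos : ∀ x ∈ l, 0 < x) {i : ℕ}
    (hi : i < l.length) : hook l i 0 < l.length + l.headD 0 := by
  rw [hook0 l hpos hi]
  have h1 : l.getD i 0 ≤ l.headD 0 := by
    have : l.headD 0 = l.getD 0 0 := by cases l <;> simp
    rw [this]; exact getD_anti l hl (Nat.zero_le i)
  omega

lemma mem_firstColHooks (l : List ℕ) {x : ℕ} :
    x ∈ firstColHooks l ↔ ∃ i, i < l.length ∧ hook l i 0 = x := by
  simp [firstColHooks]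

lemma firstColHooks_val (l : List ℕ) (hl : l.Pairwise (· ≥ ·)) (hpos : ∀ x ∈ l, 0 < x) :
    (firstColHooks l).val = (Finset.range l.length).val.map fun i => hook l i 0 := by
  apply Finset.image_val_of_injOn
  intro x hx y hy hxy
  simp only [Finset.coe_range, Set.mem_Iio] at hx hy
  dsimp only at hxy
  rcases Nat.lt_trichotomy x y with h | h | h
  · have := hook0_strict_anti l hl hpos h hy; omega
  · exact h
  · have := hook0_strict_anti l hl hpos h hx; omega

lemma hook_strict_anti (l : List ℕ) {i j j' : ℕ}
    (hjj' : j < j') (hj' : j' < l.getD i 0) : hook l i j' < hook l i j := by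
  unfold hook
  have hcard : ((Finset.range l.length).filter (fun k => i < k ∧ j' < l.getD k 0)).card
      ≤ ((Finset.range l.length).filter (fun k => i < k ∧ j < l.getD k 0)).card := by
    apply Finset.card_le_card
    intro k hk
    rw [Finset.mem_filter] at hk ⊢
    exact ⟨hk.1, hk.2.1, by omega⟩
  omega

lemma hook_le_hook0 (l : List ℕ) (i j : ℕ) : hook l i j ≤ hook l i 0 := by
  unfold hook
  have hcard : ((Finset.range l.length).filter (fun k => i < k ∧ j < l.getD k 0)).card
      ≤ ((Finset.range l.length).filter (fun k => i < k ∧ 0 < l.getD k 0)).card := by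
    apply Finset.card_le_card
    intro k hk
    rw [Finset.mem_filter] at hk ⊢
    exact ⟨hk.1, hk.2.1, by omega⟩
  omega

lemma hook_pos (l : List ℕ) {i j : ℕ} (hj : j < l.getD i 0) : 0 < hook l i j := by
  unfold hook; omega

lemma sub_hook_not_mem (l : List ℕ) (hl : l.Pairwise (· ≥ ·)) (hpos : ∀ x ∈ l, 0 < x) {i j : ℕ}
    (hi : i < l.length) (hj : j < l.getD i 0) :
    hook l i 0 - hook l i j ∉ firstColHooks l := by
  set r := l.length with hr
  -- L + M = r - 1 - i
  set L := ((Finset.range r).filter (fun k => i < k ∧ j < l.getD k 0)).card with hL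
  set M := ((Finset.range r).filter (fun k => i < k ∧ l.getD k 0 ≤ j)).card with hM
  have hLM : L + M = r - 1 - i := by
    rw [hL, hM]
    rw [← card_filter_lt r i]
    rw [← Finset.card_filter_add_card_filter_not
      (s := (Finset.range r).filter (fun k => i < k)) (p := fun k => j < l.getD k 0)]
    congr 1
    · rw [Finset.filter_filter]
    · rw [Finset.filter_filter]
      congr 1
      apply Finset.filter_congr
      intro k _
      constructor
      · rintro ⟨h1, h2⟩; exact ⟨h1, by omega⟩
      · rintro ⟨h1, h2⟩; exact ⟨h1, by omega⟩
  have hb : hook l i 0 - hook l i j = j + M := by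
    rw [hook0 l hpos hi]
    show l.getD i 0 + (r - 1 - i) - ((l.getD i 0 - j) + L) = j + M
    omega
  rw [hb]
  intro hmem
  rw [mem_firstColHooks] at hmem
  obtain ⟨k, hk, hak⟩ := hmem
  rw [hook0 l hpos hk] at hak
  rcases le_or_gt (l.getD k 0) j with hc | hc
  · -- l_k ≤ j : so k > i, and M ≥ r - k
    have hik : i < k := by
      by_contra hik
      have := getD_anti l hl (le_of_not_gt hik)
      omega
    have hMk : r - k ≤ M := by
      rw [hM]
      have hsub : Finset.Ico k r ⊆ (Finset.range r).filter (fun m => i < m ∧ l.getD m 0 ≤ j) := by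
        intro m hm
        rw [Finset.mem_Ico] at hm
        rw [Finset.mem_filter, Finset.mem_range]
        refine ⟨hm.2, by omega, ?_⟩
        exact le_trans (getD_anti l hl hm.1) hc
      have := Finset.card_le_card hsub
      rwa [Nat.card_Ico] at this
    omega
  · -- j < l_k : M ≤ r - 1 - k
    have hMk : M ≤ r - 1 - k := by
      rw [hM]
      have hsub : (Finset.range r).filter (fun m => i < m ∧ l.getD m 0 ≤ j)
          ⊆ Finset.Ioo k r := by
        intro m hm
        rw [Finset.mem_filter, Finset.mem_range] at hm
        rw [Finset.mem_Ioo]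
        refine ⟨?_, hm.1⟩
        by_contra hmk
        have := getD_anti l hl (le_of_not_gt hmk)
        omega
      have := Finset.card_le_card hsub
      rw [Nat.card_Ioo] at this
      omega
    omega

lemma row_card (l : List ℕ) (hl : l.Pairwise (· ≥ ·)) (hpos : ∀ x ∈ l, 0 < x) {i : ℕ}
    (hi : i < l.length) :
    ((Finset.range (l.length + l.headD 0) \ firstColHooks l).filter
      (fun b => b < hook l i 0)).card = l.getD i 0 := by
  set r := l.length with hr
  set A := firstColHooks l with hA
  set ai := hook l i 0 with hai
  have hait : ai < r + l.headD 0 := hook0_lt_t l hl hpos hi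
  have h1 : (Finset.range (r + l.headD 0) \ A).filter (fun b => b < ai)
      = Finset.range ai \ A := by
    ext x
    simp only [Finset.mem_filter, Finset.mem_sdiff, Finset.mem_range]
    constructor
    · rintro ⟨⟨h1, h2⟩, h3⟩; exact ⟨h3, h2⟩
    · rintro ⟨h1, h2⟩; exact ⟨⟨by omega, h2⟩, h1⟩
  rw [h1]
  have h2 : Finset.range ai \ A = Finset.range ai \ (A.filter (fun b => b < ai)) := by
    ext x
    simp only [Finset.mem_sdiff, Finset.mem_range, Finset.mem_filter]
    constructor
    · rintro ⟨h1, h2⟩; exact ⟨h1, fun h => h2 h.1⟩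
    · rintro ⟨h1, h2⟩; exact ⟨h1, fun h => h2 ⟨h, h1⟩⟩
  have h3 : A.filter (fun b => b < ai)
      = ((Finset.range r).filter (fun k => i < k)).image (fun k => hook l k 0) := by
    ext x
    simp only [Finset.mem_filter, Finset.mem_image, Finset.mem_range, hA, mem_firstColHooks]
    constructor
    · rintro ⟨⟨k, hk, rfl⟩, hlt⟩
      refine ⟨k, ⟨hk, ?_⟩, rfl⟩
      by_contra hik
      rcases eq_or_lt_of_le (le_of_not_gt hik) with rfl | h
      · omega
      · have := hook0_strict_anti l hl hpos h hi; omega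
    · rintro ⟨k, ⟨hk, hik⟩, rfl⟩
      exact ⟨⟨k, hk, rfl⟩, hook0_strict_anti l hl hpos hik hk⟩
  have h4 : (A.filter (fun b => b < ai)).card = r - 1 - i := by
    rw [h3, Finset.card_image_of_injOn]
    · have : (Finset.range r).filter (fun k => i < k) = Finset.Ioo i r := by
        ext k; simp [Finset.mem_Ioo]; omega
      rw [this, Nat.card_Ioo]; omega
    · intro x hx y hy hxy
      simp only [Finset.coe_filter, Set.mem_setOf_eq, Finset.mem_range] at hx hy
      dsimp only at hxy
      rcases Nat.lt_trichotomy x y with h | h | h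
      · have := hook0_strict_anti l hl hpos h hy.1; omega
      · exact h
      · have := hook0_strict_anti l hl hpos h hx.1; omega
  rw [h2, Finset.card_sdiff_of_subset, Finset.card_range, h4]
  · rw [hook0 l hpos hi] at hai
    omega
  · intro x hx
    rw [Finset.mem_filter] at hx
    rw [Finset.mem_range]
    exact hx.2

lemma row_lemma (l : List ℕ) (hl : l.Pairwise (· ≥ ·)) (hpos : ∀ x ∈ l, 0 < x) {i : ℕ}
    (hi : i < l.length) :
    (↑((List.range (l.getD i 0)).map fun j => hook l i j) : Multiset ℕ)
      = ((Finset.range (l.length + l.headD 0) \ firstColHooks l).filter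
          (fun b => b < hook l i 0)).val.map (fun b => hook l i 0 - b) := by
  set ai := hook l i 0 with hai
  set F := (Finset.range (l.length + l.headD 0) \ firstColHooks l).filter (fun b => b < ai)
    with hF
  have hFb : ∀ b ∈ F, b < ai := by
    intro b hb; rw [hF, Finset.mem_filter] at hb; exact hb.2
  have hnodupL : (↑((List.range (l.getD i 0)).map fun j => hook l i j) : Multiset ℕ).Nodup := by
    rw [Multiset.coe_nodup]
    apply List.Nodup.map_on
    · intro x hx y hy hxy
      rw [List.mem_range] at hx hy
      rcases Nat.lt_trichotomy x y with h | h | h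
      · have := hook_strict_anti l h hy; omega
      · exact h
      · have := hook_strict_anti l h hx; omega
    · exact List.nodup_range
  have hnodupR : (F.val.map (fun b => ai - b)).Nodup := by
    apply Multiset.Nodup.map_on
    · intro x hx y hy hxy
      have hx' := hFb x hx
      have hy' := hFb y hy
      omega
    · exact F.nodup
  have hsub : (↑((List.range (l.getD i 0)).map fun j => hook l i j) : Multiset ℕ)
      ⊆ F.val.map (fun b => ai - b) := by
    intro m hm
    rw [Multiset.mem_coe, List.mem_map] at hm
    obtain ⟨j, hj, rfl⟩ := hm
    rw [List.mem_range] at hj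
    rw [Multiset.mem_map]
    refine ⟨ai - hook l i j, ?_, ?_⟩
    · rw [← Finset.mem_def, hF, Finset.mem_filter, Finset.mem_sdiff, Finset.mem_range]
      have h1 := hook_le_hook0 l i j
      have h2 := hook_pos l (i := i) hj
      have h3 := hook0_lt_t l hl hpos hi
      exact ⟨⟨by omega, sub_hook_not_mem l hl hpos hi hj⟩, by omega⟩
    · have h1 := hook_le_hook0 l i j
      omega
  apply Multiset.eq_of_le_of_card_le
  · exact (Multiset.le_iff_subset hnodupL).mpr hsub
  · rw [Multiset.card_map, ← Finset.card_def, row_card l hl hpos hi, Multiset.coe_card,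
      List.length_map, List.length_range]

lemma posDiffs_eq_bind (S T : Finset ℕ) :
    posDiffs S T = S.val.bind fun a => ((T.filter (fun b => b < a)).val.map fun b => a - b) := by
  unfold posDiffs
  rw [Finset.filter_val, Finset.product_val]
  show Multiset.map _ (Multiset.filter _ (S.val.bind fun a => T.val.map (Prod.mk a))) = _
  rw [mfilter_bind, Multiset.map_bind]
  apply Multiset.bind_congr
  intro a _
  rw [Multiset.filter_map, Multiset.map_map, Finset.filter_val]
  rfl

lemma core (l : List ℕ) (hl : l.Pairwise (· ≥ ·)) (hpos : ∀ x ∈ l, 0 < x) :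
    hookMultiset l = posDiffs (firstColHooks l)
      (Finset.range (l.length + l.headD 0) \ firstColHooks l) := by
  rw [posDiffs_eq_bind, firstColHooks_val l hl hpos, Multiset.bind_map]
  unfold hookMultiset
  rw [← Multiset.coe_bind]
  have hval : (Finset.range l.length).val = (↑(List.range l.length) : Multiset ℕ) := rfl
  rw [hval]
  apply Multiset.bind_congr
  intro i hi
  rw [Multiset.mem_coe, List.mem_range] at hi
  exact row_lemma l hl hpos hi

lemma filter_pos_eq_take (m : List ℕ) (hm : m.Pairwise (· ≥ ·)) :
    m.filter (fun x => decide (0 < x)) = m.take (m.countP (fun x => decide (0 < x))) := by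
  induction m with
  | nil => simp
  | cons a s ih =>
    have hs : s.Pairwise (· ≥ ·) := hm.of_cons
    by_cases ha : 0 < a
    · simp only [List.filter_cons, List.countP_cons, ha, decide_true, if_true,
        List.take_succ_cons]
      rw [ih hs]
    · have ha0 : a = 0 := by omega
      have hz : ∀ x ∈ a :: s, ¬(decide (0 < x) = true) := by
        intro x hx
        rcases List.mem_cons.mp hx with rfl | hx'
        · simp [ha0]
        · have : x ≤ a := List.rel_of_pairwise_cons hm hx'
          simp; omega
      rw [List.filter_eq_nil_iff.mpr hz, List.countP_eq_zero.mpr hz, List.take_zero]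

lemma countP_range_card (r : ℕ) (p : ℕ → Prop) [DecidablePred p] :
    (List.range r).countP (fun i => decide (p i)) = ((Finset.range r).filter p).card := by
  rw [Finset.card_def, Finset.filter_val, Finset.range_val]
  show _ = Multiset.card (Multiset.filter p ↑(List.range r))
  rw [Multiset.filter_coe, Multiset.coe_card, List.countP_eq_length_filter]
lemma self_eq_map_range (l : List ℕ) : l = (List.range l.length).map (fun i => l.getD i 0) := by
  apply List.ext_getElem
  · simp
  · intro n h1 h2
    simp only [List.getElem_map, List.getElem_range]
    rw [List.getD_eq_getElem l 0 h1]

section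
variable (l : List ℕ)

lemma rev_map_sorted (hl : l.Pairwise (· ≥ ·)) :
    ((l.reverse).map fun x => l.headD 0 - x).Pairwise (· ≥ ·) := by
  apply List.Pairwise.map (fun x => l.headD 0 - x) (R := fun a b => b ≥ a)
  · intro a b h
    exact Nat.sub_le_sub_left h _
  · exact List.pairwise_reverse.mpr hl

lemma remnant_sorted (hl : l.Pairwise (· ≥ ·)) : (remnant l).Pairwise (· ≥ ·) :=
  (rev_map_sorted l hl).filter _

lemma remnant_pos : ∀ x ∈ remnant l, 0 < x := by
  intro x hx
  rw [remnant, List.mem_filter] at hx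
  simpa using hx.2

lemma remnant_eq_take (hl : l.Pairwise (· ≥ ·)) :
    remnant l = ((l.reverse).map fun x => l.headD 0 - x).take
      (((l.reverse).map fun x => l.headD 0 - x).countP (fun x => decide (0 < x))) :=
  filter_pos_eq_take _ (rev_map_sorted l hl)

lemma remnant_length :
    (remnant l).length
      = ((Finset.range l.length).filter fun k => l.getD k 0 < l.headD 0).card := by
  obtain ⟨c, hc⟩ : ∃ c, l.headD 0 = c := ⟨_, rfl⟩
  rw [remnant, hc, ← List.countP_eq_length_filter, List.countP_map, List.countP_reverse]
  rw [← countP_range_card]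
  conv_lhs => rw [self_eq_map_range l]
  rw [List.countP_map]
  apply List.countP_congr
  intro i hi
  simp only [Function.comp_apply]
  constructor <;> { intro h; simp at h ⊢; omega }

lemma remnant_getD (hl : l.Pairwise (· ≥ ·)) {i : ℕ} (hi : i < (remnant l).length) :
    (remnant l).getD i 0 = l.headD 0 - l.getD (l.length - 1 - i) 0 := by
  have hle : (remnant l).length ≤ l.length := by
    rw [remnant]
    calc (List.filter _ _).length ≤ _ := List.length_filter_le _ _
    _ = l.length := by simp
  rw [remnant_eq_take l hl]
  have hi' : i < (((l.reverse).map fun x => l.headD 0 - x).take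
      (((l.reverse).map fun x => l.headD 0 - x).countP (fun x => decide (0 < x)))).length := by
    rw [← remnant_eq_take l hl]; exact hi
  rw [List.getD_eq_getElem _ 0 hi', List.getElem_take]
  have hi2 : i < ((l.reverse).map fun x => l.headD 0 - x).length := by
    simp only [List.length_map, List.length_reverse]
    omega
  have hlen : l.length - 1 - i < l.length := by
    simp only [List.length_map, List.length_reverse] at hi2
    omega
  rw [List.getElem_map, List.getElem_reverse, List.getD_eq_getElem l 0 hlen]

end

section
variable (l : List ℕ) (hl : l.Pairwise (· ≥ ·)) (hpos : ∀ x ∈ l, 0 < x)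

lemma remnant_length_le : (remnant l).length ≤ l.length := by
  rw [remnant_length]
  exact le_trans (Finset.card_filter_le _ _) (le_of_eq (Finset.card_range _))

-- if l_k = c then r̃ ≤ r - 1 - k
lemma count_le_of_full (hl : l.Pairwise (· ≥ ·)) {k : ℕ} (hk : k < l.length)
    (hfull : ¬ l.getD k 0 < l.headD 0) :
    (remnant l).length ≤ l.length - 1 - k := by
  rw [remnant_length]
  have hsub : (Finset.range l.length).filter (fun m => l.getD m 0 < l.headD 0)
      ⊆ Finset.Ioo k l.length := by
    intro m hm
    rw [Finset.mem_filter, Finset.mem_range] at hm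
    rw [Finset.mem_Ioo]
    refine ⟨?_, hm.1⟩
    by_contra hmk
    have h1 := getD_anti l hl (le_of_not_gt hmk)
    have h2 := getD_le_head l hl k
    omega
  have := Finset.card_le_card hsub
  rw [Nat.card_Ioo] at this
  omega

-- if l_k < c then r - k ≤ r̃
lemma count_ge_of_small (hl : l.Pairwise (· ≥ ·)) {k : ℕ} (hk : k < l.length)
    (hsmall : l.getD k 0 < l.headD 0) :
    l.length - k ≤ (remnant l).length := by
  rw [remnant_length]
  have hsub : Finset.Ico k l.length
      ⊆ (Finset.range l.length).filter (fun m => l.getD m 0 < l.headD 0) := by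
    intro m hm
    rw [Finset.mem_Ico] at hm
    rw [Finset.mem_filter, Finset.mem_range]
    exact ⟨hm.2, lt_of_le_of_lt (getD_anti l hl hm.1) hsmall⟩
  have := Finset.card_le_card hsub
  rwa [Nat.card_Ico] at this

-- C1
lemma mem_firstColHooks_remnant (hl : l.Pairwise (· ≥ ·)) (hpos : ∀ x ∈ l, 0 < x) {x : ℕ} :
    x ∈ firstColHooks (remnant l)
      ↔ ∃ k, k < l.length ∧ l.getD k 0 < l.headD 0 ∧
          x + hook l k 0 + 1 = l.headD 0 + (remnant l).length := by
  have hrr : (remnant l).length ≤ l.length := remnant_length_le l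
  rw [mem_firstColHooks]
  constructor
  · rintro ⟨i, hi, rfl⟩
    have hrpos : 0 < l.length := by omega
    refine ⟨l.length - 1 - i, by omega, ?_, ?_⟩
    · by_contra hfull
      have := count_le_of_full l hl (by omega) hfull
      omega
    · rw [hook0 (remnant l) (remnant_pos l) hi, remnant_getD l hl hi,
        hook0 l hpos (show l.length - 1 - i < l.length by omega)]
      have h1 : l.getD (l.length - 1 - i) 0 ≤ l.headD 0 := getD_le_head l hl _
      have h2 : l.getD (l.length - 1 - i) 0 < l.headD 0 := by
        by_contra hfull
        have := count_le_of_full l hl (show l.length - 1 - i < l.length by omega) hfull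
        omega
      omega
  · rintro ⟨k, hk, hsmall, hx⟩
    have hge := count_ge_of_small l hl hk hsmall
    refine ⟨l.length - 1 - k, by omega, ?_⟩
    rw [hook0 (remnant l) (remnant_pos l) (by omega), remnant_getD l hl (by omega)]
    have hkk : l.length - 1 - (l.length - 1 - k) = k := by omega
    rw [hkk]
    rw [hook0 l hpos hk] at hx
    omega

-- B1'
lemma mem_A_of_large (hl : l.Pairwise (· ≥ ·)) (hpos : ∀ x ∈ l, 0 < x) {x : ℕ}
    (hxt : x < l.length + l.headD 0) (hxs : l.headD 0 + (remnant l).length ≤ x) :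
    x ∈ firstColHooks l := by
  have hrr : (remnant l).length ≤ l.length := remnant_length_le l
  set k := l.length + l.headD 0 - 1 - x with hkdef
  have hk : k < l.length := by omega
  have hfull : ¬ l.getD k 0 < l.headD 0 := by
    intro hsmall
    have := count_ge_of_small l hl hk hsmall
    omega
  have hle := getD_le_head l hl k
  rw [mem_firstColHooks]
  refine ⟨k, hk, ?_⟩
  rw [hook0 l hpos hk]
  omega

-- B2
lemma min_le_mem_A (hl : l.Pairwise (· ≥ ·)) (hpos : ∀ x ∈ l, 0 < x) {a : ℕ}
    (ha : a ∈ firstColHooks l) : l.getD (l.length - 1) 0 ≤ a := by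
  rw [mem_firstColHooks] at ha
  obtain ⟨k, hk, rfl⟩ := ha
  rw [hook0 l hpos hk]
  have := getD_anti l hl (show k ≤ l.length - 1 by omega)
  omega

-- C2
lemma tmu_eq (hl : l.Pairwise (· ≥ ·)) (hne : remnant l ≠ []) :
    (remnant l).length + (remnant l).headD 0 + l.getD (l.length - 1) 0
      = l.headD 0 + (remnant l).length := by
  have hrpos : 0 < (remnant l).length := List.length_pos_iff.mpr hne
  have hrr : (remnant l).length ≤ l.length := remnant_length_le l
  have hhead : (remnant l).headD 0 = (remnant l).getD 0 0 := by
    cases remnant l <;> simp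
  rw [hhead, remnant_getD l hl hrpos]
  have h2 : l.getD (l.length - 1 - 0) 0 < l.headD 0 := by
    by_contra hfull
    have := count_le_of_full l hl (show l.length - 1 - 0 < l.length by omega) hfull
    omega
  simp only [Nat.sub_zero] at h2 ⊢
  omega
end

lemma bridge (l : List ℕ) (hl : l.Pairwise (· ≥ ·)) (hpos : ∀ x ∈ l, 0 < x)
    (hlne : l ≠ []) (hne : remnant l ≠ []) :
    posDiffs (firstColHooks (remnant l))
      (Finset.range ((remnant l).length + (remnant l).headD 0) \ firstColHooks (remnant l))
      = posDiffs (Finset.range (l.length + l.headD 0) \ firstColHooks l) (firstColHooks l) := by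
  set A := firstColHooks l with hA
  set B := firstColHooks (remnant l) with hB
  set s := l.headD 0 + (remnant l).length with hs
  set t := l.length + l.headD 0 with ht
  set tm := (remnant l).length + (remnant l).headD 0 with htm
  set lmin := l.getD (l.length - 1) 0 with hlmin
  have hrr : (remnant l).length ≤ l.length := remnant_length_le l
  have hst : s ≤ t := by omega
  have hlminpos : 0 < lmin := by
    apply getD_pos l hpos
    have : l.length ≠ 0 := fun h => hlne (List.length_eq_zero_iff.mp h)
    omega
  have hlmin_le : ∀ a ∈ A, lmin ≤ a := fun a ha => min_le_mem_A l hl hpos ha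
  have htmu : tm + lmin = s := tmu_eq l hl hne
  -- characterization of B
  have hBt : ∀ x : ℕ, x ∈ B ↔ ∃ a, a ∈ A ∧ x + a + 1 = s := by
    intro x
    rw [hB, mem_firstColHooks_remnant l hl hpos]
    constructor
    · rintro ⟨k, hk, hsmall, hx⟩
      exact ⟨hook l k 0, (mem_firstColHooks l).mpr ⟨k, hk, rfl⟩, hx⟩
    · rintro ⟨a, haA, hxa⟩
      rw [hA, mem_firstColHooks] at haA
      obtain ⟨k, hk, rfl⟩ := haA
      refine ⟨k, hk, ?_, hxa⟩
      by_contra hfull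
      have h1 := count_le_of_full l hl hk hfull
      have h2 := getD_le_head l hl k
      rw [hook0 l hpos hk] at hxa
      omega
  -- elements of range t \ A are < s
  have hsmall : ∀ x : ℕ, x < t → x ∉ A → x < s := by
    intro x hxt hxA
    by_contra h
    exact hxA (mem_A_of_large l hl hpos hxt (by omega))
  set P₁ := ((Finset.range t \ A) ×ˢ A).filter (fun q => q.2 < q.1) with hP₁
  set P₂ := (B ×ˢ (Finset.range tm \ B)).filter (fun q => q.2 < q.1) with hP₂
  set g : ℕ × ℕ → ℕ × ℕ := fun q => (s - 1 - q.2, s - 1 - q.1) with hg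
  have hmemP₁ : ∀ q : ℕ × ℕ, q ∈ P₁ ↔ (q.1 < t ∧ q.1 ∉ A) ∧ q.2 ∈ A ∧ q.2 < q.1 := by
    intro q
    rw [hP₁, Finset.mem_filter, Finset.mem_product, Finset.mem_sdiff, Finset.mem_range]
    tauto
  have hmemP₂ : ∀ q : ℕ × ℕ, q ∈ P₂ ↔ q.1 ∈ B ∧ (q.2 < tm ∧ q.2 ∉ B) ∧ q.2 < q.1 := by
    intro q
    rw [hP₂, Finset.mem_filter, Finset.mem_product, Finset.mem_sdiff, Finset.mem_range]
    tauto
  have h_img : P₂ = P₁.image g := by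
    ext ⟨x, y⟩
    rw [hmemP₂]
    simp only [Finset.mem_image]
    constructor
    · rintro ⟨hx, ⟨hy1, hy2⟩, hyx⟩
      obtain ⟨a, haA, hxa⟩ := (hBt x).mp hx
      have hys : y < s := by omega
      refine ⟨(s - 1 - y, a), ?_, ?_⟩
      · rw [hmemP₁]
        refine ⟨⟨by omega, ?_⟩, haA, by omega⟩
        intro ha'
        exact hy2 ((hBt y).mpr ⟨s - 1 - y, ha', by omega⟩)
      · rw [hg]
        simp only [Prod.mk.injEq]
        constructor <;> omega
    · rintro ⟨⟨a', a⟩, hq, hgq⟩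
      rw [hmemP₁] at hq
      obtain ⟨⟨ha't, ha'A⟩, haA, haa'⟩ := hq
      have ha's : a' < s := hsmall a' ha't ha'A
      have hlma : lmin ≤ a := hlmin_le a haA
      rw [hg] at hgq
      simp only [Prod.mk.injEq] at hgq
      obtain ⟨hx, hy⟩ := hgq
      subst hx; subst hy
      refine ⟨(hBt _).mpr ⟨a, haA, by omega⟩, ⟨by omega, ?_⟩, by omega⟩
      intro hyB
      obtain ⟨a₂, ha₂A, ha₂⟩ := (hBt _).mp hyB
      have : a₂ = a' := by omega
      exact ha'A (this ▸ ha₂A)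
  have h_inj : Set.InjOn g ↑P₁ := by
    intro q hq q' hq' hgq
    rw [Finset.mem_coe, hmemP₁] at hq hq'
    have h1 : q.1 < s := hsmall q.1 hq.1.1 hq.1.2
    have h1' : q'.1 < s := hsmall q'.1 hq'.1.1 hq'.1.2
    rw [hg] at hgq
    simp only [Prod.mk.injEq] at hgq
    have : q.1 = q'.1 := by omega
    have : q.2 = q'.2 := by omega
    exact Prod.ext ‹q.1 = q'.1› ‹q.2 = q'.2›
  show (P₂.val).map (fun q => q.1 - q.2) = (P₁.val).map (fun q => q.1 - q.2)
  rw [h_img, Finset.image_val_of_injOn h_inj, Multiset.map_map]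
  apply Multiset.map_congr rfl
  intro q hq
  rw [← Finset.mem_def, hmemP₁ q] at hq
  have h1 : q.1 < s := hsmall q.1 hq.1.1 hq.1.2
  have h2 : q.2 < q.1 := hq.2.2
  simp only [Function.comp_apply, hg]
  omega


end Stmt4Aux

open Stmt4Aux

/-- `H(λ̃) = {a' - a : a' ∈ A', a ∈ A, a' > a}`. -/
theorem stmt4 (l : List ℕ) (hl : IsPartition l) (hne : l ≠ []) :
    hookMultiset (remnant l)
      = posDiffs (Finset.range (l.length + l.headD 0) \ firstColHooks l)
          (firstColHooks l) := by
  obtain ⟨hsort, hpos⟩ := hl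
  by_cases hrem : remnant l = []
  · rw [hrem]
    have h1 : hookMultiset [] = 0 := rfl
    rw [h1]
    symm
    have hfilter : (((Finset.range (l.length + l.headD 0) \ firstColHooks l) ×ˢ firstColHooks l).filter
        (fun q : ℕ × ℕ => q.2 < q.1)) = ∅ := by
      rw [Finset.filter_eq_empty_iff]
      rintro ⟨x, a⟩ hq
      rw [Finset.mem_product, Finset.mem_sdiff, Finset.mem_range] at hq
      obtain ⟨⟨hxt, hxA⟩, haA⟩ := hq
      simp only [not_lt]
      -- x < c
      have hxc : x < l.headD 0 := by
        by_contra hxc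
        apply hxA
        apply mem_A_of_large l hsort hpos hxt
        rw [hrem]
        simp only [List.length_nil]
        omega
      -- a ≥ c
      have hac : l.headD 0 ≤ a := by
        rw [mem_firstColHooks] at haA
        obtain ⟨k, hk, rfl⟩ := haA
        rw [hook0 l hpos hk]
        -- l_k = c
        have h2 : l.getD k 0 ≤ l.headD 0 := getD_le_head l hsort k
        have h3 : ¬ (0 < l.headD 0 - l.getD k 0) := by
          intro h
          have : l.headD 0 - l.getD k 0 ∈ remnant l := by
            rw [remnant, List.mem_filter]
            constructor
            · rw [List.mem_map]
              refine ⟨l.getD k 0, ?_, rfl⟩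
              rw [List.mem_reverse]
              rw [List.getD_eq_getElem l 0 hk]
              exact l.getElem_mem hk
            · simpa using h
          rw [hrem] at this
          simp at this
        omega
      omega
    unfold posDiffs
    rw [hfilter]
    rfl
  · rw [core (remnant l) (remnant_sorted l hsort) (remnant_pos l)]
    exact bridge l hsort hpos hne hrem
end

section
/- Let λ be a partition with r rows, A the set of its first-column hook lengths, A′ the complement of A in {0,…,t−1} where t is the row-plus-column sum, and fix a row i with left-most hook length a = h(i,1). Then the multiset of hook lengths occurring in row i of λ equals {a − a′ : a′ ∈ A′, a′ < a}. -/
/-- The hooks in row `i` are `{a - a' : a' ∈ A', a' < a}` where `a = h(i,1)`. -/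
theorem stmt5 (l : List ℕ) (hl : IsPartition l) (hne : l ≠ []) (i : ℕ) (hi : i < l.length) :
    (↑((List.range (l.getD i 0)).map fun j => hook l i j) : Multiset ℕ)
      = posDiffs {hook l i 0}
          (Finset.range (l.length + l.headD 0) \ firstColHooks l) := by
  obtain ⟨hsort, hpos'⟩ := hl
  set r := l.length with hr
  have hpos : ∀ k, k < r → 0 < l.getD k 0 := by
    intro k hk
    rw [List.getD_eq_getElem l 0 hk]
    exact hpos' _ (List.getElem_mem hk)
  have hmono : ∀ k k', k ≤ k' → k' < r → l.getD k' 0 ≤ l.getD k 0 := by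
    intro k k' hkk hk'
    rcases eq_or_lt_of_le hkk with h | h
    · subst h; exact le_rfl
    · rw [List.getD_eq_getElem l 0 hk', List.getD_eq_getElem l 0 (lt_trans h hk')]
      exact hsort.rel_get_of_lt h
  have hIio : ∀ k, k < r → ((Finset.range r).filter (fun k' => k < k')).card = r - 1 - k := by
    intro k hk
    have h : (Finset.range r).filter (fun k' => k < k') = Finset.Ico (k+1) r := by
      ext x; simp [Finset.mem_Ico]; omega
    rw [h, Nat.card_Ico]; omega
  have hook0 : ∀ k, k < r → hook l k 0 = l.getD k 0 + (r - 1 - k) := by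
    intro k hk
    have hfc : (Finset.range r).filter (fun k' => k < k' ∧ 0 < l.getD k' 0)
        = (Finset.range r).filter (fun k' => k < k') := by
      apply Finset.filter_congr
      intro x hx
      simp only [Finset.mem_range] at hx
      exact and_iff_left (hpos x hx)
    simp only [hook, Nat.sub_zero, ← hr, hfc, hIio k hk]
  have ha_lt : ∀ k k', k < k' → k' < r → hook l k' 0 < hook l k 0 := by
    intro k k' h hk'
    rw [hook0 k (by omega), hook0 k' hk']
    have := hmono k k' (le_of_lt h) hk'
    omega
  set lam := l.getD i 0 with hlam
  set a := hook l i 0 with ha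
  set g : ℕ → ℕ := fun j => j + ((Finset.range r).filter (fun k => i < k ∧ l.getD k 0 ≤ j)).card
    with hg
  have haval : a = lam + (r - 1 - i) := by rw [ha, hook0 i hi]
  have hsplit : ∀ j, j ≤ lam → hook l i j + g j = a := by
    intro j hj
    have e1 : (Finset.range r).filter (fun k => i < k ∧ j < l.getD k 0)
        = ((Finset.range r).filter (fun k => i < k)).filter (fun k => j < l.getD k 0) := by
      rw [Finset.filter_filter]
    have e2 : (Finset.range r).filter (fun k => i < k ∧ l.getD k 0 ≤ j)
        = ((Finset.range r).filter (fun k => i < k)).filter (fun k => ¬ j < l.getD k 0) := by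
      rw [Finset.filter_filter]
      apply Finset.filter_congr
      intro x _
      simp [Nat.not_lt]
    have hcc : ((Finset.range r).filter (fun k => i < k ∧ j < l.getD k 0)).card
        + ((Finset.range r).filter (fun k => i < k ∧ l.getD k 0 ≤ j)).card = r - 1 - i := by
      rw [e1, e2, Finset.card_filter_add_card_filter_not, hIio i hi]
    simp only [hook, hg, ← hr]
    omega
  have hgmono : ∀ j j', j < j' → g j < g j' := by
    intro j j' h
    have hsub : ((Finset.range r).filter (fun k => i < k ∧ l.getD k 0 ≤ j)).card
        ≤ ((Finset.range r).filter (fun k => i < k ∧ l.getD k 0 ≤ j')).card := by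
      apply Finset.card_le_card
      intro x hx
      simp only [Finset.mem_filter, Finset.mem_range] at hx ⊢
      exact ⟨hx.1, hx.2.1, le_trans hx.2.2 (le_of_lt h)⟩
    simp only [hg]
    omega
  have hginj : ∀ j j', g j = g j' → j = j' := by
    intro j j' h
    by_contra hne'
    rcases Nat.lt_or_ge j j' with h' | h'
    · exact absurd h (Nat.ne_of_lt (hgmono _ _ h'))
    · have h'' : j' < j := by omega
      exact absurd h.symm (Nat.ne_of_lt (hgmono _ _ h''))
  have hglt : ∀ j, j < lam → g j < a := by
    intro j hj
    have h1 := hsplit j (le_of_lt hj)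
    have h2 : 0 < hook l i j := by
      simp only [hook]
      omega
    omega
  have hhook_eq : ∀ j, j < lam → hook l i j = a - g j := by
    intro j hj
    have h1 := hsplit j (le_of_lt hj)
    omega
  have havoid : ∀ j k, i < k → k < r → g j ≠ hook l k 0 := by
    intro j k hik hk
    rw [hook0 k hk]
    by_cases hcase : l.getD k 0 ≤ j
    · have hsub : Finset.Ico k r ⊆ (Finset.range r).filter (fun k' => i < k' ∧ l.getD k' 0 ≤ j) := by
        intro x hx
        simp only [Finset.mem_Ico] at hx
        simp only [Finset.mem_filter, Finset.mem_range]
        exact ⟨hx.2, by omega, le_trans (hmono k x hx.1 hx.2) hcase⟩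
      have hcard := Finset.card_le_card hsub
      rw [Nat.card_Ico] at hcard
      simp only [hg]
      omega
    · have hsub : (Finset.range r).filter (fun k' => i < k' ∧ l.getD k' 0 ≤ j)
          ⊆ Finset.Ico (k+1) r := by
        intro x hx
        simp only [Finset.mem_filter, Finset.mem_range] at hx
        simp only [Finset.mem_Ico]
        refine ⟨?_, hx.1⟩
        by_contra hxk
        exact hcase (le_trans (hmono x k (by omega) hk) hx.2.2)
      have hcard := Finset.card_le_card hsub
      rw [Nat.card_Ico] at hcard
      simp only [hg]
      omega
  -- the image of g is exactly range a minus first-column hooks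
  have hsubset : (Finset.range lam).image g ⊆ Finset.range a \ firstColHooks l := by
    intro x hx
    simp only [Finset.mem_image, Finset.mem_range] at hx
    obtain ⟨j, hj, rfl⟩ := hx
    simp only [Finset.mem_sdiff, Finset.mem_range]
    refine ⟨hglt j hj, ?_⟩
    simp only [firstColHooks, Finset.mem_image, Finset.mem_range, ← hr]
    rintro ⟨k, hk, hkeq⟩
    rcases Nat.lt_or_ge i k with h' | h'
    · exact havoid j k h' hk hkeq.symm
    · have hak : a ≤ hook l k 0 := by
        rcases eq_or_lt_of_le h' with h'' | h''
        · subst h''; exact ha.le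
        · exact le_of_lt (ha_lt k i h'' hi)
      have := hglt j hj
      omega
  have hWsub : (Finset.Ioo i r).image (fun k => hook l k 0) ⊆ Finset.range a := by
    intro x hx
    simp only [Finset.mem_image, Finset.mem_Ioo] at hx
    obtain ⟨k, ⟨hk1, hk2⟩, rfl⟩ := hx
    rw [Finset.mem_range, ha]
    exact ha_lt i k hk1 hk2
  have hWcard : ((Finset.Ioo i r).image (fun k => hook l k 0)).card = r - 1 - i := by
    rw [Finset.card_image_of_injOn, Nat.card_Ioo]
    · omega
    · intro x hx y hy hxy
      simp only [Finset.mem_coe, Finset.mem_Ioo] at hx hy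
      by_contra hne'
      rcases Nat.lt_or_ge x y with h' | h'
      · exact absurd hxy (Nat.ne_of_gt (ha_lt x y h' hy.2))
      · have h'' : y < x := by omega
        exact absurd hxy (Nat.ne_of_lt (ha_lt y x h'' hx.2))
  have hWeq : Finset.range a \ firstColHooks l
      = Finset.range a \ (Finset.Ioo i r).image (fun k => hook l k 0) := by
    ext x
    simp only [Finset.mem_sdiff, Finset.mem_range, firstColHooks, Finset.mem_image,
      Finset.mem_range, Finset.mem_Ioo, ← hr]
    constructor
    · rintro ⟨hxa, hxA⟩
      exact ⟨hxa, fun ⟨k, ⟨_, hk2⟩, hkeq⟩ => hxA ⟨k, hk2, hkeq⟩⟩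
    · rintro ⟨hxa, hxW⟩
      refine ⟨hxa, ?_⟩
      rintro ⟨k, hk, rfl⟩
      rcases Nat.lt_or_ge i k with h' | h'
      · exact hxW ⟨k, ⟨h', hk⟩, rfl⟩
      · have hak : a ≤ hook l k 0 := by
          rcases eq_or_lt_of_le h' with h'' | h''
          · subst h''; exact ha.le
          · exact le_of_lt (ha_lt k i h'' hi)
        omega
  have hcardR : (Finset.range a \ firstColHooks l).card = lam := by
    rw [hWeq, Finset.card_sdiff_of_subset hWsub, hWcard, Finset.card_range]
    omega
  have himg : (Finset.range lam).image g = Finset.range a \ firstColHooks l := by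
    apply Finset.eq_of_subset_of_card_le hsubset
    rw [hcardR, Finset.card_image_of_injOn, Finset.card_range]
    intro x _ y _ hxy
    exact hginj x y hxy
  -- head bound
  have hhead : l.getD 0 0 = l.headD 0 := by
    cases l with
    | nil => exact absurd rfl hne
    | cons x xs => rfl
  have hbound : a < r + l.headD 0 := by
    have h2 : lam ≤ l.getD 0 0 := hmono 0 i (Nat.zero_le i) hi
    omega
  -- nodup of both sides
  have hLnodup : ((List.range lam).map fun j => hook l i j).Nodup := by
    apply List.Nodup.map_on _ (List.nodup_range (n := lam))
    intro x hx y hy hxy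
    rw [List.mem_range] at hx hy
    rw [hhook_eq x hx, hhook_eq y hy] at hxy
    have hx' := hglt x hx
    have hy' := hglt y hy
    exact hginj x y (by omega)
  have hRnodup : (posDiffs {a} (Finset.range (r + l.headD 0) \ firstColHooks l)).Nodup := by
    unfold posDiffs
    apply Multiset.Nodup.map_on _ (Finset.filter _ _).nodup
    rintro ⟨q1, q2⟩ hq ⟨q1', q2'⟩ hq' hqq
    simp only [Finset.mem_val, Finset.mem_filter, Finset.mem_product, Finset.mem_singleton] at hq hq'
    obtain ⟨⟨h1, _⟩, h2⟩ := hq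
    obtain ⟨⟨h1', _⟩, h2'⟩ := hq'
    simp only at hqq h2 h2'
    simp only [Prod.mk.injEq]
    omega
  refine (Multiset.Nodup.ext (Multiset.coe_nodup.2 hLnodup) hRnodup).2 ?_
  intro x
  unfold posDiffs
  simp only [Multiset.mem_coe, List.mem_map, List.mem_range, Multiset.mem_map, Finset.mem_val,
    Finset.mem_filter, Finset.mem_product, Finset.mem_singleton, Finset.mem_sdiff,
    Finset.mem_range]
  constructor
  · rintro ⟨j, hj, rfl⟩
    have hmem := hsubset (Finset.mem_image_of_mem g (Finset.mem_range.2 hj))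
    rw [Finset.mem_sdiff, Finset.mem_range] at hmem
    refine ⟨(a, g j), ⟨⟨rfl, ?_, hmem.2⟩, hmem.1⟩, (hhook_eq j hj).symm⟩
    omega
  · rintro ⟨⟨b1, b2⟩, ⟨⟨rfl, _, hb2A⟩, hba⟩, rfl⟩
    simp only at hba ⊢
    have hb : b2 ∈ (Finset.range lam).image g := by
      rw [himg, Finset.mem_sdiff, Finset.mem_range]
      exact ⟨hba, hb2A⟩
    rw [Finset.mem_image] at hb
    obtain ⟨j, hj, rfl⟩ := hb
    rw [Finset.mem_range] at hj
    exact ⟨j, hj, hhook_eq j hj⟩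
end

section
/- Let p ≥ 1 and let a_1 > a_2 > … > a_p = 1 be the characteristic of an ∞-partition of height p. Then the multiset of missing hook numbers of the ∞-partition equals {a_i − a_j : 1 ≤ i < j ≤ p}. Equivalently, regarding the characteristic as the set of first-column hook lengths of the corresponding front section, the multiset of positive integers m such that m appears fewer than p times among the hook lengths of the ∞-partition, counted with multiplicity p minus its multiplicity, is {a_i − a_j : 1 ≤ i < j ≤ p}. -/

lemma aux6_prefix {p i : ℕ} (P : ℕ → Prop) [DecidablePred P]
    (hdc : ∀ ⦃k k' : ℕ⦄, k < p → i < k' → k' ≤ k → P k → P k')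
    {k : ℕ} (hik : i < k) (hkp : k < p) :
    (P k ↔ k ≤ i + ((Finset.range p).filter (fun k => i < k ∧ P k)).card) := by
  set S := (Finset.range p).filter (fun k => i < k ∧ P k) with hS
  have hsub : S ⊆ Finset.Ioc i (i + S.card) := by
    intro k0 hk0
    have hk0' := hk0
    simp only [hS, Finset.mem_filter, Finset.mem_range] at hk0'
    obtain ⟨hk0p, hik0, hPk0⟩ := hk0'
    rw [Finset.mem_Ioc]
    refine ⟨hik0, ?_⟩
    by_contra h
    push_neg at h
    have hsubset : Finset.Ioc i k0 ⊆ S := by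
      intro k1 hk1
      rw [Finset.mem_Ioc] at hk1
      simp only [hS, Finset.mem_filter, Finset.mem_range]
      exact ⟨lt_of_le_of_lt hk1.2 hk0p, hk1.1, hdc hk0p hk1.1 hk1.2 hPk0⟩
    have hcle := Finset.card_le_card hsubset
    rw [Nat.card_Ioc] at hcle
    omega
  have heq : S = Finset.Ioc i (i + S.card) :=
    Finset.eq_of_subset_of_card_le hsub (by rw [Nat.card_Ioc]; omega)
  constructor
  · intro hP
    have hmem : k ∈ S := by
      simp only [hS, Finset.mem_filter, Finset.mem_range]; exact ⟨hkp, hik, hP⟩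
    rw [heq, Finset.mem_Ioc] at hmem
    exact hmem.2
  · intro hks
    have hmem : k ∈ S := by rw [heq, Finset.mem_Ioc]; exact ⟨hik, hks⟩
    simp only [hS, Finset.mem_filter, Finset.mem_range] at hmem
    exact hmem.2.2

lemma aux6_count (n m i : ℕ) (g : ℕ → ℕ) :
    List.count m (((List.range n).filter fun j => decide (i < j)).map fun j => g j) =
    ∑ j ∈ Finset.range n, if i < j ∧ g j = m then 1 else 0 := by
  rw [List.count_eq_countP, List.countP_map, List.countP_filter]
  rw [← Finset.card_filter]
  rw [List.countP_congr (l := List.range n)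
    (p := fun a => ((fun x => x == m) ∘ fun j => g j) a && decide (i < a))
    (q := fun a => decide (i < a ∧ g a = m)) (by intro a _; simp [Function.comp]; tauto)]
  rw [List.countP_eq_length_filter]
  rfl

/-- The missing hook numbers of an ∞-partition with front section `f` (characteristic
`(a_1,…,a_p)`, the first-column hooks of `f`) are `{a_i - a_j : i < j}`: each positive
`m` appears `p - (multiplicity of m)` times there. -/
theorem stmt6 (f : List ℕ) (hf : IsPartition f) (hne : f ≠ [])
    (hlast : f.getD (f.length - 1) 0 = 1) :
    ∀ m : ℕ, 0 < m →
      Multiset.count m (listDiffs (charList f)) + infMult f m = f.length := by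
  classical
  intro m hm
  have hpos : ∀ k, k < f.length → 0 < f.getD k 0 := by
    intro k hk
    rw [List.getD_eq_getElem f 0 hk]
    exact hf.2 _ (List.getElem_mem hk)
  have hmono : ∀ k k' : ℕ, k' ≤ k → k < f.length → f.getD k 0 ≤ f.getD k' 0 := by
    intro k k' hkk hkp
    rcases eq_or_lt_of_le hkk with rfl | h
    · exact le_refl _
    · rw [List.getD_eq_getElem f 0 hkp, List.getD_eq_getElem f 0 (lt_trans h hkp)]
      have := hf.1.rel_get_of_lt (a := ⟨k', lt_trans h hkp⟩) (b := ⟨k, hkp⟩) h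
      simpa using this
  have hA : ∀ k, k < f.length → (hook f k 0 : ℤ) = (f.getD k 0 : ℤ) + f.length - 1 - k := by
    intro k hk
    unfold hook
    have hfil : (Finset.range f.length).filter (fun k' => k < k' ∧ 0 < f.getD k' 0)
        = Finset.Ioo k f.length := by
      ext k'
      simp only [Finset.mem_filter, Finset.mem_range, Finset.mem_Ioo]
      constructor
      · rintro ⟨h1, h2, _⟩; exact ⟨h2, h1⟩
      · rintro ⟨h1, h2⟩; exact ⟨h2, h1, hpos k' h2⟩
    rw [hfil, Nat.card_Ioo]
    omega
  have hstrict : ∀ k k' : ℕ, k' ≤ k → k < f.length →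
      (hook f k 0 : ℤ) + ((k : ℤ) - (k' : ℤ)) ≤ (hook f k' 0 : ℤ) := by
    intro k k' hkk hkp
    have h1 := hA k hkp
    have h2 := hA k' (lt_of_le_of_lt hkk hkp)
    have h3 := hmono k k' hkk hkp
    omega
  have hrow : ∀ i, i < f.length →
      ((∃ j : ℤ, j < (f.getD i 0 : ℤ) ∧
        ((f.getD i 0 : ℤ) - j) +
          (((Finset.range f.length).filter fun k => i < k ∧ j < (f.getD k 0 : ℤ)).card : ℤ) = (m : ℤ))
       ↔ ¬ ∃ k, i < k ∧ k < f.length ∧ hook f i 0 = hook f k 0 + m) := by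
    intro i hi
    constructor
    · rintro ⟨j, hj, hval⟩ ⟨k, hik, hkp, hak⟩
      have hdc : ∀ ⦃k k' : ℕ⦄, k < f.length → i < k' → k' ≤ k →
          (j < (f.getD k 0 : ℤ)) → j < (f.getD k' 0 : ℤ) := by
        intro k k' h1 h2 h3 h4
        have h5 := hmono k k' h3 h1
        have h6 : (f.getD k 0 : ℤ) ≤ (f.getD k' 0 : ℤ) := by exact_mod_cast h5
        omega
      have hmem : (j < (f.getD k 0 : ℤ)) ↔
          k ≤ i + (((Finset.range f.length).filter fun k => i < k ∧ j < (f.getD k 0 : ℤ))).card :=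
        aux6_prefix _ hdc hik hkp
      have h1 := hA i hi
      have h2 := hA k hkp
      omega
    · intro hno
      push_neg at hno
      obtain ⟨s, hs⟩ : ∃ s, s = (((Finset.range f.length).filter
          (fun k => i < k ∧ (hook f i 0 : ℤ) - m < (hook f k 0 : ℤ)))).card := ⟨_, rfl⟩
      have hdc : ∀ ⦃k k' : ℕ⦄, k < f.length → i < k' → k' ≤ k →
          ((hook f i 0 : ℤ) - m < (hook f k 0 : ℤ)) →
          (hook f i 0 : ℤ) - m < (hook f k' 0 : ℤ) := by
        intro k k' h1 h2 h3 h4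
        have h5 := hstrict k k' h3 h1
        omega
      have hmem : ∀ k, i < k → k < f.length →
          (((hook f i 0 : ℤ) - m < (hook f k 0 : ℤ)) ↔ k ≤ i + s) := by
        intro k h1 h2
        have h := aux6_prefix _ hdc h1 h2
        rw [← hs] at h
        exact h
      have hScard : s ≤ f.length - i - 1 := by
        have hsub : ((Finset.range f.length).filter
            (fun k => i < k ∧ (hook f i 0 : ℤ) - m < (hook f k 0 : ℤ))) ⊆ Finset.Ioo i f.length := by
          intro k hk
          simp only [Finset.mem_filter, Finset.mem_range] at hk
          exact Finset.mem_Ioo.mpr ⟨hk.2.1, hk.1⟩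
        have h := Finset.card_le_card hsub
        rw [Nat.card_Ioo, ← hs] at h
        exact h
      have hslt : s < m := by
        rcases Nat.eq_zero_or_pos s with h0 | h0
        · omega
        · have h1 : i + s < f.length := by omega
          have h2 := (hmem (i + s) (by omega) h1).mpr (le_refl _)
          have h3 := hstrict (i + s) i (by omega) h1
          omega
      have hiff : ∀ k ∈ Finset.range f.length,
          ((i < k ∧ ((f.getD i 0 : ℤ) - m + s) < (f.getD k 0 : ℤ)) ↔
           (i < k ∧ (hook f i 0 : ℤ) - m < (hook f k 0 : ℤ))) := by
        intro k hk
        rw [Finset.mem_range] at hk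
        by_cases hik : i < k
        · simp only [hik, true_and]
          have hAi := hA i hi
          have hAk := hA k hk
          rcases le_or_gt k (i + s) with hle | hgt
          · -- both true
            have hsp : i + s < f.length := by omega
            have e1 := (hmem (i + s) (by omega) hsp).mpr (le_refl _)
            have e2 := hstrict (i + s) k hle hsp
            have e3 := (hmem k hik hk).mpr (by omega)
            have hAs := hA (i + s) hsp
            constructor
            · intro _; omega
            · intro _; omega
          · -- both false
            have hsp1 : i + s + 1 < f.length := by omega
            have e1 : ¬ ((hook f i 0 : ℤ) - m < (hook f (i + s + 1) 0 : ℤ)) := by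
              intro h
              have := (hmem (i + s + 1) (by omega) hsp1).mp h
              omega
            have e2 := hno (i + s + 1) (by omega) hsp1
            have e3 := hstrict k (i + s + 1) (by omega) hk
            have e4 : ¬ ((hook f i 0 : ℤ) - m < (hook f k 0 : ℤ)) := by
              intro h
              have := (hmem k hik hk).mp h
              omega
            have hAs := hA (i + s + 1) hsp1
            constructor
            · intro h; exfalso; omega
            · intro h; exfalso; omega
        · simp [hik]
      have hcardeq : (((Finset.range f.length).filter
          (fun k => i < k ∧ ((f.getD i 0 : ℤ) - m + s) < (f.getD k 0 : ℤ)))).card = s := by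
        conv_rhs => rw [hs]
        exact congrArg Finset.card (Finset.filter_congr hiff)
      refine ⟨(f.getD i 0 : ℤ) - m + s, by omega, ?_⟩
      rw [hcardeq]
      omega
  have hinf : infMult f m = ((Finset.range f.length).filter
      (fun i => ¬ ∃ k, i < k ∧ k < f.length ∧ hook f i 0 = hook f k 0 + m)).card := by
    unfold infMult
    rw [← Set.ncard_coe_finset]
    congr 1
    ext i
    simp only [Finset.coe_filter, Set.mem_setOf_eq, Finset.mem_range]
    exact ⟨fun ⟨h1, h2⟩ => ⟨h1, (hrow i h1).mp h2⟩, fun ⟨h1, h2⟩ => ⟨h1, (hrow i h1).mpr h2⟩⟩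
  have hlen : (charList f).length = f.length := by simp [charList]
  have hget : ∀ i, i < f.length → (charList f).getD i 0 = hook f i 0 := by
    intro i hi
    rw [charList, List.getD_eq_getElem _ _ (by simpa using hi)]
    simp
  have hcount : Multiset.count m (listDiffs (charList f)) =
      ∑ i ∈ Finset.range f.length, ∑ j ∈ Finset.range f.length,
        if i < j ∧ (charList f).getD i 0 - (charList f).getD j 0 = m then 1 else 0 := by
    unfold listDiffs
    rw [hlen]
    rw [Multiset.coe_count, List.count_flatMap]
    calc (List.map (List.count m ∘ fun i =>
            (((List.range f.length).filter fun j => decide (i < j)).map fun j =>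
              (charList f).getD i 0 - (charList f).getD j 0)) (List.range f.length)).sum
        = ∑ i ∈ Finset.range f.length,
            List.count m ((((List.range f.length).filter fun j => decide (i < j)).map fun j =>
              (charList f).getD i 0 - (charList f).getD j 0)) := rfl
      _ = ∑ i ∈ Finset.range f.length, ∑ j ∈ Finset.range f.length,
            if i < j ∧ (charList f).getD i 0 - (charList f).getD j 0 = m then 1 else 0 :=
          Finset.sum_congr rfl fun i _ => aux6_count _ _ _ _

  have hcount2 : (∑ i ∈ Finset.range f.length, ∑ j ∈ Finset.range f.length,
      if i < j ∧ (charList f).getD i 0 - (charList f).getD j 0 = m then 1 else 0) =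
      ((Finset.range f.length).filter
        (fun i => ∃ k, i < k ∧ k < f.length ∧ hook f i 0 = hook f k 0 + m)).card := by
    rw [Finset.card_filter]
    apply Finset.sum_congr rfl
    intro i hi
    rw [Finset.mem_range] at hi
    have hinner : (∑ j ∈ Finset.range f.length,
        if i < j ∧ (charList f).getD i 0 - (charList f).getD j 0 = m then 1 else 0) =
        ((Finset.range f.length).filter
          (fun j => i < j ∧ hook f i 0 - hook f j 0 = m)).card := by
      rw [Finset.card_filter]
      apply Finset.sum_congr rfl
      intro j hj
      rw [Finset.mem_range] at hj
      simp only [hget i hi, hget j hj]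
    rw [hinner]
    by_cases hex : ∃ k, i < k ∧ k < f.length ∧ hook f i 0 = hook f k 0 + m
    · obtain ⟨k0, hk1, hk2, hk3⟩ := hex
      rw [if_pos ⟨k0, hk1, hk2, hk3⟩]
      have hsingle : (Finset.range f.length).filter
          (fun j => i < j ∧ hook f i 0 - hook f j 0 = m) = {k0} := by
        ext j
        simp only [Finset.mem_filter, Finset.mem_range, Finset.mem_singleton]
        constructor
        · rintro ⟨hjn, hij, hsub⟩
          have e1 := hstrict j i (le_of_lt hij) hjn
          rcases lt_trichotomy j k0 with hc | hc | hc
          · exfalso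
            have e2 := hstrict k0 j (le_of_lt hc) hk2
            omega
          · exact hc
          · exfalso
            have e2 := hstrict j k0 (le_of_lt hc) hjn
            omega
        · rintro rfl
          refine ⟨hk2, hk1, by omega⟩
      rw [hsingle, Finset.card_singleton]
    · rw [if_neg hex]
      rw [Finset.card_eq_zero]
      rw [Finset.eq_empty_iff_forall_notMem]
      intro j hj
      simp only [Finset.mem_filter, Finset.mem_range] at hj
      obtain ⟨hjn, hij, hsub⟩ := hj
      have e1 := hstrict j i (le_of_lt hij) hjn
      exact hex ⟨j, hij, hjn, by omega⟩
  rw [hcount, hcount2, hinf, Finset.card_filter_add_card_filter_not,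
    Finset.card_range]
end

section
/- Let (a_1,…,a_p) be a strictly decreasing sequence of positive integers with a_p = 1 (the characteristic of an ∞-partition), let x ≥ a_1 be an integer, and form the sequence (a_1+x, …, a_p+x, a_1, …, a_p) of length 2p. Then the multiset of pairwise differences (larger minus smaller over all ordered pairs i < j) of the new sequence equals 2·D ∪ p·{x} ∪ {x + d : d ∈ D} ∪ {x − d : d ∈ D}, where D = {a_i − a_j : 1 ≤ i < j ≤ p}. In particular, if two such sequences (a_i) and (b_i) have equal difference multisets D, then the corresponding doubled sequences also have equal difference multisets. -/
lemma key (p : ℕ) (a : ℕ → ℕ)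
    (ha : ∀ i j, 1 ≤ i → i < j → j ≤ p → a j < a i) (x : ℕ) :
    seqDiffs (fun i => if i ≤ p then a i + x else a (i - p)) (2 * p)
      = seqDiffs a p + seqDiffs a p + Multiset.replicate p x
        + (seqDiffs a p).map (fun d => x + d) + (seqDiffs a p).map (fun d => x - d) := by
  classical
  set c : ℕ → ℕ := fun i => if i ≤ p then a i + x else a (i - p) with hc
  set T : Finset (ℕ × ℕ) := (Finset.Icc 1 p ×ˢ Finset.Icc 1 p).filter (fun q => q.1 < q.2) with hT
  set S : Finset (ℕ × ℕ) :=
    (Finset.Icc 1 (2*p) ×ˢ Finset.Icc 1 (2*p)).filter (fun q => q.1 < q.2) with hS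
  have hTmem : ∀ q : ℕ × ℕ, q ∈ T.val ↔ 1 ≤ q.1 ∧ q.1 < q.2 ∧ q.2 ≤ p := by
    intro q; rw [← Finset.mem_def]
    simp [hT, Finset.mem_filter, Finset.mem_product]; omega
  have hSmem : ∀ q : ℕ × ℕ, q ∈ S.val ↔ 1 ≤ q.1 ∧ q.1 < q.2 ∧ q.2 ≤ 2*p := by
    intro q; rw [← Finset.mem_def]
    simp [hS, Finset.mem_filter, Finset.mem_product]; omega
  set e2 : ℕ × ℕ → ℕ × ℕ := fun q => (q.1 + p, q.2 + p) with he2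
  set e3 : ℕ × ℕ → ℕ × ℕ := fun q => (q.1, q.2 + p) with he3
  set e4 : ℕ × ℕ → ℕ × ℕ := fun q => (q.2, q.1 + p) with he4
  set e5 : ℕ → ℕ × ℕ := fun i => (i, i + p) with he5
  have hm2 : ∀ q : ℕ × ℕ, q ∈ T.val.map e2 ↔ p + 1 ≤ q.1 ∧ q.1 < q.2 ∧ q.2 ≤ 2*p := by
    intro q
    simp only [Multiset.mem_map]
    constructor
    · rintro ⟨r, hr, rfl⟩; rw [hTmem] at hr; simp [he2]; omega
    · rintro h
      exact ⟨(q.1 - p, q.2 - p), (hTmem _).2 (by omega), by simp [he2, Prod.ext_iff]; omega⟩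
  have hm3 : ∀ q : ℕ × ℕ, q ∈ T.val.map e3 ↔ 1 ≤ q.1 ∧ q.1 + p < q.2 ∧ q.1 ≤ p ∧ q.2 ≤ 2*p := by
    intro q
    simp only [Multiset.mem_map]
    constructor
    · rintro ⟨r, hr, rfl⟩; rw [hTmem] at hr; simp [he3]; omega
    · rintro h
      exact ⟨(q.1, q.2 - p), (hTmem _).2 (by omega), by simp [he3, Prod.ext_iff]; omega⟩
  have hm4 : ∀ q : ℕ × ℕ,
      q ∈ T.val.map e4 ↔ p + 1 ≤ q.2 ∧ q.2 < q.1 + p ∧ q.1 ≤ p := by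
    intro q
    simp only [Multiset.mem_map]
    constructor
    · rintro ⟨r, hr, rfl⟩; rw [hTmem] at hr; simp [he4]; omega
    · rintro h
      exact ⟨(q.2 - p, q.1), (hTmem _).2 (by omega), by simp [he4, Prod.ext_iff]; omega⟩
  have hm5 : ∀ q : ℕ × ℕ,
      q ∈ (Finset.Icc 1 p).val.map e5 ↔ 1 ≤ q.1 ∧ q.1 ≤ p ∧ q.2 = q.1 + p := by
    intro q
    simp only [Multiset.mem_map, ← Finset.mem_def, Finset.mem_Icc]
    constructor
    · rintro ⟨i, hi, rfl⟩; simp [he5]; omega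
    · rintro h
      exact ⟨q.1, by omega, by simp [he5, Prod.ext_iff]; omega⟩
  have inj2 : Set.InjOn e2 T := fun r _ s _ h => by
    have h1 := congrArg Prod.fst h
    have h2 := congrArg Prod.snd h
    simp only [he2] at h1 h2
    exact Prod.ext_iff.2 ⟨by omega, by omega⟩
  have inj3 : Set.InjOn e3 T := fun r _ s _ h => by
    have h1 := congrArg Prod.fst h
    have h2 := congrArg Prod.snd h
    simp only [he3] at h1 h2
    exact Prod.ext_iff.2 ⟨by omega, by omega⟩
  have inj4 : Set.InjOn e4 T := fun r _ s _ h => by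
    have h1 := congrArg Prod.fst h
    have h2 := congrArg Prod.snd h
    simp only [he4] at h1 h2
    exact Prod.ext_iff.2 ⟨by omega, by omega⟩
  have inj5 : Set.InjOn e5 (Finset.Icc 1 p : Finset ℕ) := fun r _ s _ h => by
    have h1 := congrArg Prod.fst h
    simp only [he5] at h1
    exact h1
  have nd2 : (T.val.map e2).Nodup := T.nodup.map_on fun r hr s hs => inj2 hr hs
  have nd3 : (T.val.map e3).Nodup := T.nodup.map_on fun r hr s hs => inj3 hr hs
  have nd4 : (T.val.map e4).Nodup := T.nodup.map_on fun r hr s hs => inj4 hr hs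
  have nd5 : ((Finset.Icc 1 p).val.map e5).Nodup :=
    (Finset.Icc 1 p).nodup.map_on fun r hr s hs => inj5 hr hs
  have hdisj : ∀ (u v : Multiset (ℕ × ℕ)) (P Q : ℕ × ℕ → Prop),
      (∀ q, q ∈ u ↔ P q) → (∀ q, q ∈ v ↔ Q q) → (∀ q, P q → ¬ Q q) →
      Disjoint u v := by
    intro u v P Q hu hv h
    exact Multiset.disjoint_left.mpr fun {q} hqu hqv => h q ((hu q).1 hqu) ((hv q).1 hqv)
  have hval : S.val = T.val + T.val.map e2 + (Finset.Icc 1 p).val.map e5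
      + T.val.map e3 + T.val.map e4 := by
    refine (Multiset.Nodup.ext S.nodup ?_).2 ?_
    · simp only [Multiset.nodup_add, Multiset.disjoint_add_left]
      refine ⟨⟨⟨⟨T.nodup, nd2, ?_⟩, nd5, ?_, ?_⟩, nd3, ⟨?_, ?_⟩, ?_⟩, nd4, ⟨⟨?_, ?_⟩, ?_⟩, ?_⟩
      · exact hdisj _ _ _ _ hTmem hm2 (by intro q; omega)
      · exact hdisj _ _ _ _ hTmem hm5 (by intro q; omega)
      · exact hdisj _ _ _ _ hm2 hm5 (by intro q; omega)
      · exact hdisj _ _ _ _ hTmem hm3 (by intro q; omega)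
      · exact hdisj _ _ _ _ hm2 hm3 (by intro q; omega)
      · exact hdisj _ _ _ _ hm5 hm3 (by intro q; omega)
      · exact hdisj _ _ _ _ hTmem hm4 (by intro q; omega)
      · exact hdisj _ _ _ _ hm2 hm4 (by intro q; omega)
      · exact hdisj _ _ _ _ hm5 hm4 (by intro q; omega)
      · exact hdisj _ _ _ _ hm3 hm4 (by intro q; omega)
    · intro q
      simp only [Multiset.mem_add]
      rw [hSmem, hTmem, hm2, hm3, hm4, hm5]
      omega
  have goal1 : seqDiffs c (2 * p) = S.val.map (fun q => c q.1 - c q.2) := rfl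
  rw [goal1, hval]
  simp only [Multiset.map_add, Multiset.map_map]
  have p1 : T.val.map (fun q : ℕ × ℕ => c q.1 - c q.2) = seqDiffs a p := by
    refine Multiset.map_congr rfl fun q hq => ?_
    rw [hTmem] at hq
    simp only [hc]
    rw [if_pos (by omega : q.1 ≤ p), if_pos (by omega : q.2 ≤ p)]
    omega
  have p2 : T.val.map ((fun q : ℕ × ℕ => c q.1 - c q.2) ∘ e2) = seqDiffs a p := by
    refine Multiset.map_congr rfl fun q hq => ?_
    rw [hTmem] at hq
    simp only [hc, he2, Function.comp]
    rw [if_neg (by omega : ¬ q.1 + p ≤ p), if_neg (by omega : ¬ q.2 + p ≤ p)]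
    simp
  have p3 : T.val.map ((fun q : ℕ × ℕ => c q.1 - c q.2) ∘ e3)
      = (seqDiffs a p).map (fun d => x + d) := by
    rw [seqDiffs, Multiset.map_map]
    refine Multiset.map_congr rfl fun q hq => ?_
    rw [hTmem] at hq
    have := ha q.1 q.2 hq.1 hq.2.1 hq.2.2
    simp only [hc, he3, Function.comp]
    rw [if_pos (by omega : q.1 ≤ p), if_neg (by omega : ¬ q.2 + p ≤ p)]
    simp only [Nat.add_sub_cancel]
    omega
  have p4 : T.val.map ((fun q : ℕ × ℕ => c q.1 - c q.2) ∘ e4)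
      = (seqDiffs a p).map (fun d => x - d) := by
    rw [seqDiffs, Multiset.map_map]
    refine Multiset.map_congr rfl fun q hq => ?_
    rw [hTmem] at hq
    have := ha q.1 q.2 hq.1 hq.2.1 hq.2.2
    simp only [hc, he4, Function.comp]
    rw [if_pos (by omega : q.2 ≤ p), if_neg (by omega : ¬ q.1 + p ≤ p)]
    simp only [Nat.add_sub_cancel]
    omega
  have p5 : (Finset.Icc 1 p).val.map ((fun q : ℕ × ℕ => c q.1 - c q.2) ∘ e5)
      = Multiset.replicate p x := by
    have : (Finset.Icc 1 p).val.map ((fun q : ℕ × ℕ => c q.1 - c q.2) ∘ e5)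
        = (Finset.Icc 1 p).val.map (fun _ => x) := by
      refine Multiset.map_congr rfl fun i hi => ?_
      rw [← Finset.mem_def, Finset.mem_Icc] at hi
      simp only [hc, he5, Function.comp]
      rw [if_pos (by omega : i ≤ p), if_neg (by omega : ¬ i + p ≤ p)]
      simp only [Nat.add_sub_cancel]
      omega
    rw [this, Multiset.map_const']
    congr 1
    simpa using Nat.card_Icc 1 p
  rw [p1, p2, p3, p4, p5]

/-- Doubling a characteristic: the difference multiset of
`(a_1+x,…,a_p+x,a_1,…,a_p)` is `2·D ∪ p·{x} ∪ {x+d} ∪ {x-d}`; in particular equal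
difference multisets are preserved by doubling. -/
theorem stmt9 (p : ℕ) (hp : 0 < p) (a : ℕ → ℕ)
    (ha : ∀ i j, 1 ≤ i → i < j → j ≤ p → a j < a i)
    (hap : a p = 1) (x : ℕ) (hx : a 1 ≤ x) :
    seqDiffs (fun i => if i ≤ p then a i + x else a (i - p)) (2 * p)
      = seqDiffs a p + seqDiffs a p + Multiset.replicate p x
        + (seqDiffs a p).map (fun d => x + d) + (seqDiffs a p).map (fun d => x - d)
    ∧ ∀ b : ℕ → ℕ, (∀ i j, 1 ≤ i → i < j → j ≤ p → b j < b i) → b p = 1 →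
        seqDiffs b p = seqDiffs a p →
        seqDiffs (fun i => if i ≤ p then b i + x else b (i - p)) (2 * p)
          = seqDiffs (fun i => if i ≤ p then a i + x else a (i - p)) (2 * p) := by
  refine ⟨key p a ha x, fun b hb hbp hba => ?_⟩
  rw [key p b hb x, key p a ha x, hba]
end

section
/- Let (a_1,…,a_p) and (b_1,…,b_p) be strictly decreasing sequences of positive integers with a_p = b_p = 1 and equal difference multisets {a_i − a_j : i<j} = {b_i − b_j : i<j}. Let x ≥ a_1 and form a′ = (a_1+x,…,a_p+x,a_1,…,a_p) and b′ = (b_1+x,…,b_p+x,b_1,…,b_p). Then {a′_i − a′_j : 1 ≤ i ≤ p, i < j ≤ 2p} = {b′_i − b′_j : 1 ≤ i ≤ p, i < j ≤ 2p} as multisets. -/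
lemma sq_lemma (p x : ℕ) (a : ℕ → ℕ)
    (ha : ∀ i j, 1 ≤ i → i < j → j ≤ p → a j < a i)
    (hx : ∀ j, 1 ≤ j → j ≤ p → a j ≤ x) :
    ((Finset.Icc 1 p ×ˢ Finset.Icc 1 p).val.map (fun q => a q.1 + x - a q.2))
      = (seqDiffs a p).map (fun d => x + d) + (seqDiffs a p).map (fun d => x - d)
        + Multiset.replicate p x := by
  classical
  set S := Finset.Icc 1 p ×ˢ Finset.Icc 1 p with hS
  set M := S.val with hM
  have hmem : ∀ q ∈ M, (1 ≤ q.1 ∧ q.1 ≤ p) ∧ 1 ≤ q.2 ∧ q.2 ≤ p := by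
    intro q hq
    have : q ∈ S := hq
    simpa [hS, Finset.mem_product] using this
  have hsplit1 : M = M.filter (fun q => q.1 < q.2) + M.filter (fun q => ¬ q.1 < q.2) :=
    (Multiset.filter_add_not _ _).symm
  have hsplit2 : M.filter (fun q => ¬ q.1 < q.2)
      = (M.filter (fun q => ¬ q.1 < q.2)).filter (fun q => q.2 < q.1)
        + (M.filter (fun q => ¬ q.1 < q.2)).filter (fun q => ¬ q.2 < q.1) :=
    (Multiset.filter_add_not _ _).symm
  -- part 1
  have h1 : (M.filter (fun q => q.1 < q.2)).map (fun q => a q.1 + x - a q.2)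
      = (seqDiffs a p).map (fun d => x + d) := by
    have hsd : seqDiffs a p = (M.filter (fun q => q.1 < q.2)).map (fun q => a q.1 - a q.2) := by
      simp [seqDiffs, Finset.filter_val, hM, hS]
    rw [hsd, Multiset.map_map]
    apply Multiset.map_congr rfl
    intro q hq
    have hq' := Multiset.mem_filter.mp hq
    obtain ⟨⟨h1a, h1b⟩, h2a, h2b⟩ := hmem q hq'.1
    have := ha q.1 q.2 h1a hq'.2 h2b
    simp only [Function.comp]
    omega
  -- part 2 : swap
  have hswap : M.map Prod.swap = M := by
    have := congrArg Finset.val (Finset.map_swap_product (Finset.Icc 1 p) (Finset.Icc 1 p))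
    rw [Finset.map_val] at this
    exact this
  have hfiltfilt : (M.filter (fun q => ¬ q.1 < q.2)).filter (fun q => q.2 < q.1)
      = M.filter (fun q => q.2 < q.1) := by
    rw [Multiset.filter_filter]
    apply Multiset.filter_congr
    intro q _
    constructor
    · exact fun h => h.1
    · exact fun h => ⟨h, by omega⟩
  have h2 : ((M.filter (fun q => ¬ q.1 < q.2)).filter (fun q => q.2 < q.1)).map
        (fun q => a q.1 + x - a q.2) = (seqDiffs a p).map (fun d => x - d) := by
    rw [hfiltfilt]
    have hkey : M.filter (fun q : ℕ × ℕ => q.2 < q.1)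
        = (M.filter (fun q : ℕ × ℕ => q.1 < q.2)).map Prod.swap := by
      conv_lhs => rw [← hswap]
      rw [Multiset.filter_map]
      rfl
    have hsd : seqDiffs a p = (M.filter (fun q => q.1 < q.2)).map (fun q => a q.1 - a q.2) := by
      simp [seqDiffs, Finset.filter_val, hM, hS]
    rw [hkey, Multiset.map_map, hsd, Multiset.map_map]
    apply Multiset.map_congr rfl
    intro q hq
    have hq' := Multiset.mem_filter.mp hq
    obtain ⟨⟨h1a, h1b⟩, h2a, h2b⟩ := hmem q hq'.1
    have := ha q.1 q.2 h1a hq'.2 h2b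
    have := hx q.2 h2a h2b
    simp only [Function.comp, Prod.swap]
    omega
  -- part 3 : diagonal
  have hdiag : (M.filter (fun q => ¬ q.1 < q.2)).filter (fun q => ¬ q.2 < q.1)
      = (Finset.diag (Finset.Icc 1 p)).val := by
    rw [Multiset.filter_filter, ← Finset.filter_val]
    congr 1
    ext q
    simp only [hS, Finset.mem_filter, Finset.mem_product, Finset.mem_Icc, Finset.mem_diag]
    omega
  have h3 : ((M.filter (fun q => ¬ q.1 < q.2)).filter (fun q => ¬ q.2 < q.1)).map
        (fun q => a q.1 + x - a q.2) = Multiset.replicate p x := by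
    rw [hdiag]
    have hc : ∀ q ∈ (Finset.diag (Finset.Icc 1 p)).val, a q.1 + x - a q.2 = x := by
      intro q hq
      have : q ∈ Finset.diag (Finset.Icc 1 p) := hq
      rw [Finset.mem_diag] at this
      rw [← this.2]
      omega
    calc ((Finset.diag (Finset.Icc 1 p)).val).map (fun q => a q.1 + x - a q.2)
        = ((Finset.diag (Finset.Icc 1 p)).val).map (fun _ => x) :=
          Multiset.map_congr rfl hc
      _ = Multiset.replicate p x := by
          rw [Multiset.map_const']
          congr 1
          simpa using Finset.diag_card (Finset.Icc 1 p)
  calc M.map (fun q => a q.1 + x - a q.2)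
      = (M.filter (fun q => q.1 < q.2)).map (fun q => a q.1 + x - a q.2)
        + ((M.filter (fun q => ¬ q.1 < q.2)).filter (fun q => q.2 < q.1)).map
            (fun q => a q.1 + x - a q.2)
        + ((M.filter (fun q => ¬ q.1 < q.2)).filter (fun q => ¬ q.2 < q.1)).map
            (fun q => a q.1 + x - a q.2) := by
        conv_lhs => rw [hsplit1, hsplit2]
        simp [Multiset.map_add, add_assoc]
    _ = _ := by rw [h1, h2, h3]

lemma half_lemma (p x : ℕ) (hp : 0 < p) (a : ℕ → ℕ)
    (ha : ∀ i j, 1 ≤ i → i < j → j ≤ p → a j < a i)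
    (hx : ∀ j, 1 ≤ j → j ≤ p → a j ≤ x) :
    ((Finset.Icc 1 p ×ˢ Finset.Icc 1 (2 * p)).filter fun q => q.1 < q.2).val.map
        (fun q => (if q.1 ≤ p then a q.1 + x else a (q.1 - p))
          - (if q.2 ≤ p then a q.2 + x else a (q.2 - p)))
      = seqDiffs a p + ((seqDiffs a p).map (fun d => x + d)
          + (seqDiffs a p).map (fun d => x - d) + Multiset.replicate p x) := by
  classical
  set f : ℕ × ℕ → ℕ := fun q => (if q.1 ≤ p then a q.1 + x else a (q.1 - p))
          - (if q.2 ≤ p then a q.2 + x else a (q.2 - p)) with hf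
  set F := (Finset.Icc 1 p ×ˢ Finset.Icc 1 (2 * p)).filter fun q => q.1 < q.2 with hF
  have hsplit : F.val = F.val.filter (fun q => q.2 ≤ p) + F.val.filter (fun q => ¬ q.2 ≤ p) :=
    (Multiset.filter_add_not _ _).symm
  -- part A
  have hA1 : F.val.filter (fun q => q.2 ≤ p)
      = ((Finset.Icc 1 p ×ˢ Finset.Icc 1 p).filter fun q => q.1 < q.2).val := by
    rw [← Finset.filter_val]
    congr 1
    ext q
    simp only [hF, Finset.mem_filter, Finset.mem_product, Finset.mem_Icc]
    omega
  have hA : (F.val.filter (fun q => q.2 ≤ p)).map f = seqDiffs a p := by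
    rw [hA1, seqDiffs]
    apply Multiset.map_congr rfl
    intro q hq
    have hq' : q ∈ (Finset.Icc 1 p ×ˢ Finset.Icc 1 p).filter fun q => q.1 < q.2 := hq
    simp only [Finset.mem_filter, Finset.mem_product, Finset.mem_Icc] at hq'
    obtain ⟨⟨⟨h1a, h1b⟩, h2a, h2b⟩, hlt⟩ := hq'
    simp only [hf, if_pos h1b, if_pos h2b]
    omega
  -- part B
  have hinj : Function.Injective (fun q : ℕ × ℕ => (q.1, q.2 + p)) := by
    intro u v h
    simp only [Prod.ext_iff] at h ⊢
    omega
  have hB1 : F.filter (fun q => ¬ q.2 ≤ p)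
      = (Finset.Icc 1 p ×ˢ Finset.Icc 1 p).map ⟨_, hinj⟩ := by
    ext q
    simp only [hF, Finset.filter_filter, Finset.mem_filter, Finset.mem_product, Finset.mem_Icc,
      Finset.mem_map, Function.Embedding.coeFn_mk]
    constructor
    · rintro ⟨⟨⟨h1a, h1b⟩, h2a, h2b⟩, hlt, hgt⟩
      refine ⟨(q.1, q.2 - p), by omega, ?_⟩
      rw [Prod.ext_iff]
      exact ⟨rfl, by show q.2 - p + p = q.2; omega⟩
    · rintro ⟨u, hu, rfl⟩
      omega
  have hB : (F.val.filter (fun q => ¬ q.2 ≤ p)).map f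
      = (Finset.Icc 1 p ×ˢ Finset.Icc 1 p).val.map (fun q => a q.1 + x - a q.2) := by
    have : F.val.filter (fun q => ¬ q.2 ≤ p)
        = (Finset.Icc 1 p ×ˢ Finset.Icc 1 p).val.map (fun q : ℕ × ℕ => (q.1, q.2 + p)) := by
      rw [← Finset.filter_val, hB1, Finset.map_val]
      rfl
    rw [this, Multiset.map_map]
    apply Multiset.map_congr rfl
    intro q hq
    have hq' : q ∈ Finset.Icc 1 p ×ˢ Finset.Icc 1 p := hq
    simp only [Finset.mem_product, Finset.mem_Icc] at hq'
    obtain ⟨⟨h1a, h1b⟩, h2a, h2b⟩ := hq'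
    simp only [Function.comp, hf, if_pos h1b, if_neg (by omega : ¬ q.2 + p ≤ p),
      Nat.add_sub_cancel]
  rw [hsplit, Multiset.map_add, hA, hB, sq_lemma p x a ha hx]

lemma one_le_helper (p : ℕ) (hp : 0 < p) (a : ℕ → ℕ)
    (ha : ∀ i j, 1 ≤ i → i < j → j ≤ p → a j < a i) (hap : a p = 1) :
    ∀ j, 1 ≤ j → j ≤ p → 1 ≤ a j ∧ a j ≤ a 1 := by
  intro j h1 h2
  constructor
  · rcases lt_or_eq_of_le h2 with h | h
    · have := ha j p h1 h le_rfl
      omega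
    · rw [h, hap]
  · rcases lt_or_eq_of_le h1 with h | h
    · exact (ha 1 j le_rfl h h2).le
    · rw [← h]


/-- The differences `{a'_i - a'_j : 1 ≤ i ≤ p, i < j ≤ 2p}` of the doubled sequences agree. -/
theorem stmt10 (p : ℕ) (hp : 0 < p) (a b : ℕ → ℕ)
    (ha : ∀ i j, 1 ≤ i → i < j → j ≤ p → a j < a i)
    (hb : ∀ i j, 1 ≤ i → i < j → j ≤ p → b j < b i)
    (hap : a p = 1) (hbp : b p = 1)
    (heq : seqDiffs a p = seqDiffs b p) (x : ℕ) (hx : a 1 ≤ x) :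
    ((Finset.Icc 1 p ×ˢ Finset.Icc 1 (2 * p)).filter fun q => q.1 < q.2).val.map
        (fun q => (if q.1 ≤ p then a q.1 + x else a (q.1 - p))
          - (if q.2 ≤ p then a q.2 + x else a (q.2 - p)))
      = ((Finset.Icc 1 p ×ˢ Finset.Icc 1 (2 * p)).filter fun q => q.1 < q.2).val.map
        (fun q => (if q.1 ≤ p then b q.1 + x else b (q.1 - p))
          - (if q.2 ≤ p then b q.2 + x else b (q.2 - p))) := by
  have hha := one_le_helper p hp a ha hap
  have hhb := one_le_helper p hp b hb hbp
  have hxa : ∀ j, 1 ≤ j → j ≤ p → a j ≤ x := fun j h1 h2 => le_trans (hha j h1 h2).2 hx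
  have hb1 : b 1 ≤ a 1 := by
    rcases Nat.lt_or_ge 1 p with h | h
    · have hmem : b 1 - 1 ∈ seqDiffs b p := by
        apply Multiset.mem_map.mpr
        refine ⟨(1, p), ?_, by simp [hbp]⟩
        have : ((1 : ℕ), p) ∈ (Finset.Icc 1 p ×ˢ Finset.Icc 1 p).filter fun q => q.1 < q.2 := by
          simp only [Finset.mem_filter, Finset.mem_product, Finset.mem_Icc]
          omega
        exact this
      rw [← heq] at hmem
      obtain ⟨q, hq, hval⟩ := Multiset.mem_map.mp hmem
      have hq' : q ∈ (Finset.Icc 1 p ×ˢ Finset.Icc 1 p).filter fun q => q.1 < q.2 := hq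
      simp only [Finset.mem_filter, Finset.mem_product, Finset.mem_Icc] at hq'
      obtain ⟨⟨⟨h1a, h1b⟩, h2a, h2b⟩, _⟩ := hq'
      have ha1 := (hha q.1 h1a h1b).2
      have ha2 := (hha q.2 h2a h2b).1
      have hb1' := (hhb 1 le_rfl hp).1
      have ha1' := (hha 1 le_rfl hp).1
      omega
    · have hp1 : p = 1 := by omega
      subst hp1
      have := (hha 1 le_rfl le_rfl).1
      omega
  have hxb : ∀ j, 1 ≤ j → j ≤ p → b j ≤ x :=
    fun j h1 h2 => le_trans (hhb j h1 h2).2 (hb1.trans hx)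
  rw [half_lemma p x hp a ha hxa, half_lemma p x hp b hb hxb, heq]
end

section
/- Let λ and μ be two partitions with equal hook-length multisets H(λ) = H(μ), and fix a period p less than the number of rows of each. Suppose the remainders λ^(r) and μ^(r) (the partitions formed by all parts beyond the first p) have equal hook-length multisets, and the ∞-partitions formed from the top p rows of λ and μ have equal missing-hook-number multisets. Then the extensions are equal: λ_p − λ_{p+1} = μ_p − μ_{p+1}. -/
namespace Stmt11
open Finset Multiset

def lam (l : List ℕ) (i : ℕ) : ℕ := l.getD i 0
def hf (l : List ℕ) (i : ℕ) : ℕ := lam l i + (l.length - 1 - i)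
def cf (l : List ℕ) (i j : ℕ) : ℕ :=
  j + ((Finset.Ioo i l.length).filter fun k => lam l k ≤ j).card

theorem lam_anti (hl : IsPartition l) {i j : ℕ} (hij : i ≤ j) : lam l j ≤ lam l i := by
  rcases lt_or_ge j l.length with hj | hj
  · have hi : i < l.length := lt_of_le_of_lt hij hj
    rcases eq_or_lt_of_le hij with rfl | hlt
    · exact le_refl _
    · have := List.Pairwise.rel_get_of_lt hl.1 (a := ⟨i, hi⟩) (b := ⟨j, hj⟩) hlt
      simpa [lam, List.getD_eq_getElem?_getD, List.getElem?_eq_getElem, hi, hj] using this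
  · have h0 : lam l j = 0 := by
      simp [lam, List.getD_eq_getElem?_getD, List.getElem?_eq_none (by simpa using hj)]
    omega

theorem lam_pos (hl : IsPartition l) {i : ℕ} (hi : i < l.length) : 1 ≤ lam l i := by
  have : lam l i ∈ l := by
    rw [lam, List.getD_eq_getElem?_getD, List.getElem?_eq_getElem hi]
    exact List.getElem_mem _
  exact hl.2 _ this

theorem hf_lt (hl : IsPartition l) {i k : ℕ} (hik : i < k) (hk : k < l.length) :
    hf l k < hf l i := by
  have h1 : lam l k ≤ lam l i := lam_anti hl (le_of_lt hik)
  unfold hf; omega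

theorem hf_anti (hl : IsPartition l) {i k : ℕ} (hik : i ≤ k) (hk : k < l.length) :
    hf l k ≤ hf l i := by
  rcases eq_or_lt_of_le hik with rfl | h
  · exact le_refl _
  · exact le_of_lt (hf_lt hl h hk)

theorem hook_add_cf (hi : i < l.length) (hj : j < lam l i) :
    hook l i j + cf l i j = hf l i := by
  have hfe : (Finset.range l.length).filter (fun k => i < k ∧ j < lam l k)
      = (Finset.Ioo i l.length).filter (fun k => j < lam l k) := by
    ext k; simp [Finset.mem_filter, Finset.mem_Ioo]; tauto
  have hcard : ((Finset.Ioo i l.length).filter (fun k => j < lam l k)).card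
      + ((Finset.Ioo i l.length).filter (fun k => ¬ (j < lam l k))).card
      = (Finset.Ioo i l.length).card := Finset.card_filter_add_card_filter_not _
  have hc2 : ((Finset.Ioo i l.length).filter (fun k => ¬ (j < lam l k)))
      = ((Finset.Ioo i l.length).filter (fun k => lam l k ≤ j)) := by
    ext k; simp [Finset.mem_filter]
  have hIoo : (Finset.Ioo i l.length).card = l.length - 1 - i := by
    rw [Nat.card_Ioo]; omega
  rw [hc2] at hcard
  unfold hook cf hf
  have : (Finset.filter (fun k => i < k ∧ j < l.getD k 0) (Finset.range l.length)).card
      = (Finset.filter (fun k => j < lam l k) (Finset.Ioo i l.length)).card := by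
    rw [← hfe]; rfl
  rw [this]
  have hji : j < lam l i := hj
  unfold lam at *
  omega

end Stmt11
namespace Stmt11

theorem cf_strictMono (hj : j < j') : cf l i j < cf l i j' := by
  have hs : ((Finset.Ioo i l.length).filter fun k => lam l k ≤ j)
      ⊆ ((Finset.Ioo i l.length).filter fun k => lam l k ≤ j') := by
    intro k hk
    simp only [Finset.mem_filter] at hk ⊢
    exact ⟨hk.1, by omega⟩
  have := Finset.card_le_card hs
  unfold cf; omega

theorem cf_lt_hf (hi : i < l.length) (hj : j < lam l i) : cf l i j < hf l i := by
  have h1 : ((Finset.Ioo i l.length).filter fun k => lam l k ≤ j).card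
      ≤ (Finset.Ioo i l.length).card := Finset.card_le_card (Finset.filter_subset _ _)
  rw [Nat.card_Ioo] at h1
  unfold cf hf; omega

theorem cf_ne_hf (hl : IsPartition l) (hik : i < k) (hk : k < l.length) (hj : j < lam l i) :
    cf l i j ≠ hf l k := by
  rcases le_or_gt (lam l k) j with hc | hc
  · -- cf > hf k
    have hsub : Finset.Ico k l.length ⊆ ((Finset.Ioo i l.length).filter fun k' => lam l k' ≤ j) := by
      intro k' hk'
      simp only [Finset.mem_Ico] at hk'
      simp only [Finset.mem_filter, Finset.mem_Ioo]
      refine ⟨⟨by omega, hk'.2⟩, le_trans (lam_anti hl hk'.1) hc⟩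
    have hcard := Finset.card_le_card hsub
    rw [Nat.card_Ico] at hcard
    have hlam : 1 ≤ lam l k := lam_pos hl hk
    unfold cf hf; omega
  · -- cf < hf k
    have hsub : ((Finset.Ioo i l.length).filter fun k' => lam l k' ≤ j) ⊆ Finset.Ioo k l.length := by
      intro k' hk'
      simp only [Finset.mem_filter, Finset.mem_Ioo] at hk'
      simp only [Finset.mem_Ioo]
      refine ⟨?_, hk'.1.2⟩
      by_contra hle
      push_neg at hle
      have := lam_anti hl hle
      omega
    have hcard := Finset.card_le_card hsub
    rw [Nat.card_Ioo] at hcard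
    unfold cf hf; omega

theorem rowA (hl : IsPartition l) (hi : i < l.length) :
    (Finset.range (lam l i)).image (cf l i) ∪ (Finset.Ioo i l.length).image (hf l)
      = Finset.range (hf l i) := by
  have hinj1 : Set.InjOn (cf l i) (Finset.range (lam l i)) := by
    intro a _ b _ hab
    by_contra hne
    rcases lt_or_gt_of_ne hne with h | h
    · exact absurd hab (Nat.ne_of_lt (cf_strictMono h))
    · exact absurd hab.symm (Nat.ne_of_lt (cf_strictMono h))
  have hinj2 : Set.InjOn (hf l) (Finset.Ioo i l.length) := by
    intro a ha b hb hab
    simp only [Finset.coe_Ioo, Set.mem_Ioo] at ha hb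
    by_contra hne
    rcases lt_or_gt_of_ne hne with h | h
    · exact absurd hab (Nat.ne_of_gt (hf_lt hl h hb.2))
    · exact absurd hab.symm (Nat.ne_of_gt (hf_lt hl h ha.2))
  have hsub : (Finset.range (lam l i)).image (cf l i) ∪ (Finset.Ioo i l.length).image (hf l)
      ⊆ Finset.range (hf l i) := by
    intro t ht
    simp only [Finset.mem_union, Finset.mem_image, Finset.mem_range, Finset.mem_Ioo] at ht ⊢
    rcases ht with ⟨j, hj, rfl⟩ | ⟨k, hk, rfl⟩
    · exact cf_lt_hf hi hj
    · exact hf_lt hl hk.1 hk.2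
  have hdisj : Disjoint ((Finset.range (lam l i)).image (cf l i))
      ((Finset.Ioo i l.length).image (hf l)) := by
    rw [Finset.disjoint_left]
    intro t ht1 ht2
    simp only [Finset.mem_image, Finset.mem_range, Finset.mem_Ioo] at ht1 ht2
    obtain ⟨j, hj, rfl⟩ := ht1
    obtain ⟨k, hk, he⟩ := ht2
    exact cf_ne_hf hl hk.1 hk.2 hj he.symm
  refine Finset.eq_of_subset_of_card_le hsub ?_
  rw [Finset.card_union_of_disjoint hdisj, Finset.card_image_of_injOn hinj1,
    Finset.card_image_of_injOn hinj2]
  rw [Finset.card_range, Finset.card_range, Nat.card_Ioo]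
  unfold hf; omega

end Stmt11
namespace Stmt11

theorem rev_range (n : ℕ) :
    (Multiset.range n).map (fun t => n - t) = (Multiset.range n).map (· + 1) := by
  have h1 : (Finset.range n).image (fun t => n - t) = Finset.Icc 1 n := by
    ext s
    simp only [Finset.mem_image, Finset.mem_range, Finset.mem_Icc]
    constructor
    · rintro ⟨t, ht, rfl⟩; omega
    · rintro ⟨h1, h2⟩; exact ⟨n - s, by omega, by omega⟩
  have h2 : (Finset.range n).image (· + 1) = Finset.Icc 1 n := by
    ext s
    simp only [Finset.mem_image, Finset.mem_range, Finset.mem_Icc]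
    constructor
    · rintro ⟨t, ht, rfl⟩; omega
    · rintro ⟨ha, hb⟩; exact ⟨s - 1, by omega, by omega⟩
  have i1 : Set.InjOn (fun t => n - t) (Finset.range n) := by
    intro a ha b hb hab
    simp only [Finset.coe_range, Set.mem_Iio] at ha hb
    simp only at hab; omega
  have i2 : Set.InjOn (· + 1) (Finset.range n) := by
    intro a _ b _ hab; simpa using hab
  have := congrArg Finset.val (h1.trans h2.symm)
  rwa [Finset.image_val_of_injOn i1, Finset.image_val_of_injOn i2, Finset.range_val] at this

theorem rowM (hl : IsPartition l) (hi : i < l.length) :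
    (Multiset.range (lam l i)).map (hook l i)
      + (Finset.Ioo i l.length).val.map (fun k => hf l i - hf l k)
      = (Multiset.range (hf l i)).map (· + 1) := by
  have hinj1 : Set.InjOn (cf l i) (Finset.range (lam l i)) := by
    intro a _ b _ hab
    by_contra hne
    rcases lt_or_gt_of_ne hne with h | h
    · exact absurd hab (Nat.ne_of_lt (cf_strictMono h))
    · exact absurd hab.symm (Nat.ne_of_lt (cf_strictMono h))
  have hinj2 : Set.InjOn (hf l) (Finset.Ioo i l.length) := by
    intro a ha b hb hab
    simp only [Finset.coe_Ioo, Set.mem_Ioo] at ha hb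
    by_contra hne
    rcases lt_or_gt_of_ne hne with h | h
    · exact absurd hab (Nat.ne_of_gt (hf_lt hl h hb.2))
    · exact absurd hab.symm (Nat.ne_of_gt (hf_lt hl h ha.2))
  have hdisj : Disjoint ((Finset.range (lam l i)).image (cf l i))
      ((Finset.Ioo i l.length).image (hf l)) := by
    rw [Finset.disjoint_left]
    intro t ht1 ht2
    simp only [Finset.mem_image, Finset.mem_range, Finset.mem_Ioo] at ht1 ht2
    obtain ⟨j, hj, rfl⟩ := ht1
    obtain ⟨k, hk, he⟩ := ht2
    exact cf_ne_hf hl hk.1 hk.2 hj he.symm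
  -- step 1: row hooks = map (hf i - ·) over image of cf
  have s1 : (Multiset.range (lam l i)).map (hook l i)
      = (((Finset.range (lam l i)).image (cf l i)).val).map (fun t => hf l i - t) := by
    rw [Finset.image_val_of_injOn hinj1, Multiset.map_map, Finset.range_val]
    apply Multiset.map_congr rfl
    intro j hj
    rw [Multiset.mem_range] at hj
    have := hook_add_cf hi hj
    simp only [Function.comp_apply]
    omega
  have s2 : (Finset.Ioo i l.length).val.map (fun k => hf l i - hf l k)
      = (((Finset.Ioo i l.length).image (hf l)).val).map (fun t => hf l i - t) := by
    rw [Finset.image_val_of_injOn hinj2, Multiset.map_map]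
    rfl
  rw [s1, s2, ← Multiset.map_add]
  have s3 : ((Finset.range (lam l i)).image (cf l i)).val
      + ((Finset.Ioo i l.length).image (hf l)).val
      = (Finset.range (hf l i)).val := by
    calc ((Finset.range (lam l i)).image (cf l i)).val
          + ((Finset.Ioo i l.length).image (hf l)).val
        = (((Finset.range (lam l i)).image (cf l i)).disjUnion
            ((Finset.Ioo i l.length).image (hf l)) hdisj).val := rfl
      _ = (((Finset.range (lam l i)).image (cf l i))
            ∪ ((Finset.Ioo i l.length).image (hf l))).val := by
          rw [Finset.disjUnion_eq_union]
      _ = (Finset.range (hf l i)).val := by rw [rowA hl hi]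
  rw [s3, Finset.range_val, rev_range]

end Stmt11
namespace Stmt11

def HMseg (l : List ℕ) (p : ℕ) : Multiset ℕ :=
  (Finset.Ico p l.length).val.bind fun i => (Multiset.range (lam l i)).map (hook l i)

def Dseg (l : List ℕ) (p : ℕ) : Multiset ℕ :=
  (Finset.Ico p l.length).val.bind fun i =>
    (Finset.Ioo i l.length).val.map fun k => hf l i - hf l k

def Tseg (l : List ℕ) (p : ℕ) : Multiset ℕ :=
  (Finset.Ico p l.length).val.bind fun i => (Multiset.range (hf l i)).map (· + 1)

theorem master (hl : IsPartition l) (p : ℕ) : HMseg l p + Dseg l p = Tseg l p := by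
  unfold HMseg Dseg Tseg
  rw [← Multiset.bind_add]
  apply Multiset.bind_congr
  intro i hi
  rw [Finset.mem_val, Finset.mem_Ico] at hi
  exact rowM hl hi.2

theorem hookMultiset_eq (l : List ℕ) : hookMultiset l = HMseg l 0 := by
  unfold hookMultiset HMseg
  rw [← Finset.range_eq_Ico]
  rw [show (List.range l.length).flatMap (fun i => (List.range (l.getD i 0)).map fun j => hook l i j)
      = (List.range l.length).flatMap (fun i => (List.range (l.getD i 0)).map fun j => hook l i j)
      from rfl]
  rw [← Multiset.coe_bind]
  rfl

theorem reindex (p q : ℕ) (f : ℕ → Multiset ℕ) :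
    (Finset.Ico p q).val.bind f = (Finset.range (q - p)).val.bind fun i => f (p + i) := by
  have h1 : (Finset.range (q - p)).image (fun i => p + i) = Finset.Ico p q := by
    ext s
    simp only [Finset.mem_image, Finset.mem_range, Finset.mem_Ico]
    constructor
    · rintro ⟨t, ht, rfl⟩; omega
    · rintro ⟨ha, hb⟩; exact ⟨s - p, by omega, by omega⟩
  have hinj : Set.InjOn (fun i => p + i) (Finset.range (q - p)) := by
    intro a _ b _ hab; simpa using hab
  rw [← h1, Finset.image_val_of_injOn hinj, Multiset.bind_map]

theorem lam_drop (l : List ℕ) (p i : ℕ) : lam (l.drop p) i = lam l (p + i) := by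
  unfold lam
  rcases lt_or_ge (p + i) l.length with h | h
  · rw [List.getD_eq_getElem?_getD, List.getD_eq_getElem?_getD,
      List.getElem?_eq_getElem (by rw [List.length_drop]; omega), List.getElem?_eq_getElem h]
    simp [List.getElem_drop]
  · rw [List.getD_eq_getElem?_getD, List.getD_eq_getElem?_getD,
      List.getElem?_eq_none (by rw [List.length_drop]; omega), List.getElem?_eq_none (by omega)]

theorem hook_drop (l : List ℕ) (p i j : ℕ) :
    hook (l.drop p) i j = hook l (p + i) j := by
  unfold hook
  rw [List.length_drop]
  have hc : ((Finset.range (l.length - p)).filter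
        (fun k => i < k ∧ j < (l.drop p).getD k 0)).card
      = ((Finset.range l.length).filter (fun k => p + i < k ∧ j < l.getD k 0)).card := by
    apply Finset.card_bij (fun k _ => p + k)
    · intro k hk
      simp only [Finset.mem_filter, Finset.mem_range] at hk ⊢
      have := lam_drop l p k
      unfold lam at this
      refine ⟨by omega, by omega, by rw [← this]; exact hk.2.2⟩
    · intro a ha b hb hab; omega
    · intro k hk
      simp only [Finset.mem_filter, Finset.mem_range] at hk
      refine ⟨k - p, ?_, by omega⟩
      simp only [Finset.mem_filter, Finset.mem_range]
      have := lam_drop l p (k - p)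
      unfold lam at this
      have he : p + (k - p) = k := by omega
      rw [he] at this
      refine ⟨by omega, by omega, by rw [this]; exact hk.2.2⟩
  have hl2 := lam_drop l p i
  unfold lam at hl2
  rw [hc, hl2]

theorem HMseg_drop (l : List ℕ) (p : ℕ) : hookMultiset (l.drop p) = HMseg l p := by
  rw [hookMultiset_eq, HMseg, HMseg, reindex p l.length]
  rw [← Finset.range_eq_Ico, List.length_drop]
  apply Multiset.bind_congr
  intro i _
  rw [lam_drop]
  congr 1
  ext j
  exact hook_drop l p i j

end Stmt11
namespace Stmt11

def Dtop (l : List ℕ) (p : ℕ) : Multiset ℕ :=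
  (Finset.range p).val.bind fun i => (Finset.Ioo i p).val.map fun k => hf l i - hf l k

def Xc (l : List ℕ) (p : ℕ) : Multiset ℕ :=
  (Finset.range p).val.bind fun i => (Finset.Ico p l.length).val.map fun k => hf l i - hf l k

def Ttop (l : List ℕ) (p : ℕ) : Multiset ℕ :=
  (Finset.range p).val.bind fun i => (Multiset.range (hf l i)).map (· + 1)

theorem val_add_of_union (s t u : Finset ℕ) (hd : Disjoint s t) (h : s ∪ t = u) :
    s.val + t.val = u.val := by
  calc s.val + t.val = (s.disjUnion t hd).val := rfl
    _ = (s ∪ t).val := by rw [Finset.disjUnion_eq_union]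
    _ = u.val := by rw [h]

theorem Tseg_split (l : List ℕ) (p : ℕ) (hpr : p ≤ l.length) :
    Tseg l 0 = Ttop l p + Tseg l p := by
  unfold Tseg Ttop
  rw [← Multiset.add_bind]
  congr 1
  apply (val_add_of_union _ _ _ ?_ ?_).symm
  · rw [Finset.disjoint_left]; intro a ha hb
    simp only [Finset.mem_range] at ha
    simp only [Finset.mem_Ico] at hb
    omega
  · ext k; simp only [Finset.mem_union, Finset.mem_range, Finset.mem_Ico]; omega

theorem Dseg_split (l : List ℕ) (p : ℕ) (hpr : p ≤ l.length) :
    Dseg l 0 = Dtop l p + Xc l p + Dseg l p := by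
  unfold Dseg Dtop Xc
  have h1 : (Finset.Ico 0 l.length).val = (Finset.range p).val + (Finset.Ico p l.length).val := by
    apply (val_add_of_union _ _ _ ?_ ?_).symm
    · rw [Finset.disjoint_left]; intro a ha hb
      simp only [Finset.mem_range] at ha
      simp only [Finset.mem_Ico] at hb
      omega
    · ext k
      simp only [Finset.mem_union, Finset.mem_range, Finset.mem_Ico]
      omega
  rw [h1, Multiset.add_bind]
  congr 1
  have h2 : ∀ i ∈ (Finset.range p).val,
      (Finset.Ioo i l.length).val.map (fun k => hf l i - hf l k)
        = (Finset.Ioo i p).val.map (fun k => hf l i - hf l k)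
          + (Finset.Ico p l.length).val.map (fun k => hf l i - hf l k) := by
    intro i hi
    rw [Finset.mem_val, Finset.mem_range] at hi
    rw [← Multiset.map_add]
    congr 1
    apply (val_add_of_union _ _ _ ?_ ?_).symm
    · rw [Finset.disjoint_left]; intro a ha hb
      simp only [Finset.mem_Ioo] at ha
      simp only [Finset.mem_Ico] at hb
      omega
    · ext k
      simp only [Finset.mem_union, Finset.mem_Ioo, Finset.mem_Ico]
      omega
  rw [Multiset.bind_congr h2, Multiset.bind_add]

end Stmt11
namespace Stmt11

theorem missing_eq (hl : IsPartition l) (hp : 0 < p) (hpl : p < l.length) :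
    missingHooks l p = Dtop l p := by
  set fs := frontSection l p with hfs
  have hlen : fs.length = p := by
    rw [hfs]; unfold frontSection
    rw [List.length_map, List.length_take]
    omega
  have hfsd : ∀ i < p, fs.getD i 0 = lam l i + 1 - lam l (p - 1) := by
    intro i hi
    rw [hfs]
    unfold frontSection
    rw [List.getD_eq_getElem?_getD, List.getElem?_eq_getElem (by
      rw [List.length_map, List.length_take]; omega)]
    simp only [List.getElem_map, List.getElem_take, Option.getD_some]
    have hgd : l.getD i 0 = l[i]'(by omega) := by
      rw [List.getD_eq_getElem?_getD, List.getElem?_eq_getElem (show i < l.length by omega)]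
      rfl
    unfold lam
    rw [hgd]
  have hfspos : ∀ k < p, 0 < fs.getD k 0 := by
    intro k hk
    rw [hfsd k hk]
    have := lam_anti hl (show k ≤ p - 1 by omega)
    omega
  have hhookfs : ∀ i < p, hook fs i 0 = (lam l i + 1 - lam l (p - 1)) + (p - 1 - i) := by
    intro i hi
    unfold hook
    rw [hlen]
    have hfe : (Finset.range p).filter (fun k => i < k ∧ 0 < fs.getD k 0) = Finset.Ioo i p := by
      ext k
      simp only [Finset.mem_filter, Finset.mem_range, Finset.mem_Ioo]
      constructor
      · rintro ⟨h1, h2, _⟩; exact ⟨h2, h1⟩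
      · rintro ⟨h1, h2⟩; exact ⟨h2, h1, hfspos k h2⟩
    rw [hfe, Nat.card_Ioo, hfsd i hi]
    omega
  -- charList
  set ch := charList fs with hch
  have hchlen : ch.length = p := by rw [hch]; unfold charList; rw [List.length_map, List.length_range, hlen]
  have hchd : ∀ i < p, ch.getD i 0 = (lam l i + 1 - lam l (p - 1)) + (p - 1 - i) := by
    intro i hi
    rw [hch]
    unfold charList
    rw [List.getD_eq_getElem?_getD, List.getElem?_eq_getElem (by
      rw [List.length_map, List.length_range, hlen]; exact hi)]
    simp only [List.getElem_map, List.getElem_range, Option.getD_some]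
    exact hhookfs i hi
  -- listDiffs
  unfold missingHooks
  rw [← hfs, ← hch]
  unfold listDiffs
  rw [hchlen]
  rw [show ((List.range p).flatMap fun i => ((List.range p).filter fun j => decide (i < j)).map
        fun j => ch.getD i 0 - ch.getD j 0)
      = ((List.range p).flatMap fun i => ((List.range p).filter fun j => decide (i < j)).map
        fun j => ch.getD i 0 - ch.getD j 0) from rfl]
  rw [← Multiset.coe_bind]
  unfold Dtop
  rw [show ((Finset.range p).val : Multiset ℕ) = ↑(List.range p) from rfl]
  apply Multiset.bind_congr
  intro i hi
  rw [Multiset.mem_coe, List.mem_range] at hi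
  have hfilt : ((List.range p).filter fun j => decide (i < j) : Multiset ℕ)
      = (Finset.Ioo i p).val := by
    have : (Finset.Ioo i p) = (Finset.range p).filter (fun j => i < j) := by
      ext k
      simp only [Finset.mem_filter, Finset.mem_range, Finset.mem_Ioo]
      tauto
    rw [this, Finset.filter_val]
    rw [show ((Finset.range p).val : Multiset ℕ) = ↑(List.range p) from rfl]
    rw [Multiset.filter_coe]
  rw [show (↑(((List.range p).filter fun j => decide (i < j)).map
        fun j => ch.getD i 0 - ch.getD j 0) : Multiset ℕ)
      = Multiset.map (fun j => ch.getD i 0 - ch.getD j 0)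
        ↑((List.range p).filter fun j => decide (i < j)) from rfl]
  rw [hfilt]
  apply Multiset.map_congr rfl
  intro j hj
  rw [Finset.mem_val, Finset.mem_Ioo] at hj
  rw [hchd i hi, hchd j hj.2]
  have h1 := lam_anti hl (show i ≤ j from le_of_lt hj.1)
  have h2 := lam_anti hl (show j ≤ p - 1 by omega)
  unfold hf
  have hj2 : j < l.length := by omega
  omega

end Stmt11
namespace Stmt11

theorem count_Ttop (n p : ℕ) (hn1 : 1 ≤ n) (hbig : ∀ i < p, n ≤ hf l i) :
    Multiset.count n (Ttop l p) = p := by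
  unfold Ttop
  rw [Multiset.count_bind]
  have h1 : ∀ i ∈ (Finset.range p).val,
      Multiset.count n ((Multiset.range (hf l i)).map (· + 1)) = 1 := by
    intro i hi
    rw [Finset.mem_val, Finset.mem_range] at hi
    have hnd : ((Multiset.range (hf l i)).map (· + 1)).Nodup :=
      (Multiset.nodup_range _).map (fun a b h => by omega)
    have hmem : n ∈ (Multiset.range (hf l i)).map (· + 1) := by
      rw [Multiset.mem_map]
      exact ⟨n - 1, by rw [Multiset.mem_range]; have := hbig i hi; omega, by omega⟩
    rw [Multiset.count_eq_one_of_mem hnd hmem]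
  rw [Multiset.map_congr rfl h1]
  rw [show (fun (_ : ℕ) => (1 : ℕ)) = Function.const ℕ 1 from rfl, Multiset.map_const,
    Multiset.sum_replicate, smul_eq_mul, mul_one, Finset.range_val, Multiset.card_range]

theorem count_Xc_zero (n p : ℕ)
    (h : ∀ i < p, ∀ k, p ≤ k → k < l.length → hf l i - hf l k ≠ n) :
    Multiset.count n (Xc l p) = 0 := by
  rw [Multiset.count_eq_zero]
  intro hmem
  unfold Xc at hmem
  rw [Multiset.mem_bind] at hmem
  obtain ⟨i, hi, hmem⟩ := hmem
  rw [Finset.mem_val, Finset.mem_range] at hi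
  rw [Multiset.mem_map] at hmem
  obtain ⟨k, hk, he⟩ := hmem
  rw [Finset.mem_val, Finset.mem_Ico] at hk
  exact h i hi k hk.1 hk.2 he

theorem count_Xc_pos (p : ℕ) (hp : 0 < p) (hpl : p < l.length) :
    1 ≤ Multiset.count (hf l (p - 1) - hf l p) (Xc l p) := by
  rw [Nat.one_le_iff_ne_zero, Ne, Multiset.count_eq_zero, not_not]
  unfold Xc
  rw [Multiset.mem_bind]
  refine ⟨p - 1, by rw [Finset.mem_val, Finset.mem_range]; omega, ?_⟩
  rw [Multiset.mem_map]
  exact ⟨p, by rw [Finset.mem_val, Finset.mem_Ico]; omega, rfl⟩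

theorem not_lt_aux (l m : List ℕ) (p : ℕ) (hp : 0 < p)
    (hl : IsPartition l) (hm : IsPartition m)
    (hpl : p < l.length) (hpm : p < m.length)
    (hH : hookMultiset l = hookMultiset m)
    (hrem : hookMultiset (l.drop p) = hookMultiset (m.drop p))
    (hinf : missingHooks l p = missingHooks m p) :
    ¬ (hf l (p - 1) - hf l p < hf m (p - 1) - hf m p) := by
  intro hlt
  set x := hf l (p - 1) - hf l p with hx
  set y := hf m (p - 1) - hf m p with hy
  have hxpos : 1 ≤ x := by
    have := hf_lt hl (show p - 1 < p by omega) hpl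
    omega
  -- the master count identities
  have A1 : Multiset.count x (hookMultiset l) + Multiset.count x (Dseg l 0)
      = Multiset.count x (Tseg l 0) := by
    have := congrArg (Multiset.count x) (master hl 0)
    rwa [Multiset.count_add, ← hookMultiset_eq] at this
  have A4 : Multiset.count x (hookMultiset (l.drop p)) + Multiset.count x (Dseg l p)
      = Multiset.count x (Tseg l p) := by
    have := congrArg (Multiset.count x) (master hl p)
    rwa [Multiset.count_add, ← HMseg_drop] at this
  have A2 : Multiset.count x (Dseg l 0) = Multiset.count x (Dtop l p)
      + Multiset.count x (Xc l p) + Multiset.count x (Dseg l p) := by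
    rw [Dseg_split l p (le_of_lt hpl), Multiset.count_add, Multiset.count_add]
  have A3 : Multiset.count x (Tseg l 0) = Multiset.count x (Ttop l p)
      + Multiset.count x (Tseg l p) := by
    rw [Tseg_split l p (le_of_lt hpl), Multiset.count_add]
  have B1 : Multiset.count x (hookMultiset m) + Multiset.count x (Dseg m 0)
      = Multiset.count x (Tseg m 0) := by
    have := congrArg (Multiset.count x) (master hm 0)
    rwa [Multiset.count_add, ← hookMultiset_eq] at this
  have B4 : Multiset.count x (hookMultiset (m.drop p)) + Multiset.count x (Dseg m p)
      = Multiset.count x (Tseg m p) := by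
    have := congrArg (Multiset.count x) (master hm p)
    rwa [Multiset.count_add, ← HMseg_drop] at this
  have B2 : Multiset.count x (Dseg m 0) = Multiset.count x (Dtop m p)
      + Multiset.count x (Xc m p) + Multiset.count x (Dseg m p) := by
    rw [Dseg_split m p (le_of_lt hpm), Multiset.count_add, Multiset.count_add]
  have B3 : Multiset.count x (Tseg m 0) = Multiset.count x (Ttop m p)
      + Multiset.count x (Tseg m p) := by
    rw [Tseg_split m p (le_of_lt hpm), Multiset.count_add]
  have C1 : Multiset.count x (hookMultiset l) = Multiset.count x (hookMultiset m) := by rw [hH]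
  have C2 : Multiset.count x (hookMultiset (l.drop p))
      = Multiset.count x (hookMultiset (m.drop p)) := by rw [hrem]
  have C3 : Multiset.count x (Dtop l p) = Multiset.count x (Dtop m p) := by
    rw [← missing_eq hl hp hpl, ← missing_eq hm hp hpm, hinf]
  have D1 : Multiset.count x (Ttop l p) = p := by
    apply count_Ttop x p hxpos
    intro i hi
    have h1 : hf l (p - 1) ≤ hf l i := hf_anti hl (by omega) (by omega)
    omega
  have D2 : Multiset.count x (Ttop m p) = p := by
    apply count_Ttop x p hxpos
    intro i hi
    have h1 : hf m (p - 1) ≤ hf m i := hf_anti hm (by omega) (by omega)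
    omega
  have D3 : Multiset.count x (Xc m p) = 0 := by
    apply count_Xc_zero
    intro i hi k hk1 hk2
    have h1 : hf m (p - 1) ≤ hf m i := hf_anti hm (by omega) (by omega)
    have h2 : hf m k ≤ hf m p := hf_anti hm hk1 hk2
    have h3 : hf m p < hf m (p - 1) := hf_lt hm (by omega) (by omega)
    omega
  have D4 := count_Xc_pos p hp hpl
  rw [← hx] at D4
  omega

end Stmt11
/-- Clustered partitions with clustered remainders and clustered ∞-partitions
have equal extensions. -/
theorem stmt11 (l m : List ℕ) (p : ℕ) (hp : 0 < p)
    (hl : IsPartition l) (hm : IsPartition m)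
    (hpl : p < l.length) (hpm : p < m.length)
    (hH : hookMultiset l = hookMultiset m)
    (hrem : hookMultiset (l.drop p) = hookMultiset (m.drop p))
    (hinf : missingHooks l p = missingHooks m p) :
    extension l p = extension m p := by
  have h1 := Stmt11.not_lt_aux l m p hp hl hm hpl hpm hH hrem hinf
  have h2 := Stmt11.not_lt_aux m l p hp hm hl hpm hpl hH.symm hrem.symm hinf.symm
  have heq : Stmt11.hf l (p - 1) - Stmt11.hf l p = Stmt11.hf m (p - 1) - Stmt11.hf m p := by omega
  have el : Stmt11.lam l p ≤ Stmt11.lam l (p - 1) := Stmt11.lam_anti hl (by omega)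
  have em : Stmt11.lam m p ≤ Stmt11.lam m (p - 1) := Stmt11.lam_anti hm (by omega)
  have hxl : 1 ≤ Stmt11.hf l (p - 1) - Stmt11.hf l p := by
    have := Stmt11.hf_lt hl (show p - 1 < p by omega) hpl
    omega
  unfold extension
  unfold Stmt11.hf Stmt11.lam at *
  omega
end

section
/- Suppose {λ, μ} is a periodic cluster of period p: for every n ≥ 0, the partitions obtained by incrementing the first p parts of λ and of μ by n have equal hook-length multisets. Then the remainders λ^(r) and μ^(r) have equal hook-length multisets if and only if the ∞-partitions λ_∞ and μ_∞ formed from the rumps have equal missing-hook-number multisets. -/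
namespace Aux13


/-- beta number of row `i` (first-column hook). -/
def bVal (l : List ℕ) (i : ℕ) : ℕ := l.getD i 0 + (l.length - 1 - i)

/-- position function along row `i`. -/
def Fmap (l : List ℕ) (i j : ℕ) : ℕ :=
  j + ((Finset.range l.length).filter fun k => i < k ∧ l.getD k 0 ≤ j).card

lemma getD_anti (l : List ℕ) (hl : l.Pairwise (· ≥ ·)) {i j : ℕ} (hij : i ≤ j)
    (hj : j < l.length) : l.getD j 0 ≤ l.getD i 0 := by
  have hi : i < l.length := lt_of_le_of_lt hij hj
  rw [List.getD_eq_getElem l 0 hj, List.getD_eq_getElem l 0 hi]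
  rcases eq_or_lt_of_le hij with rfl | h
  · exact le_refl _
  · exact hl.rel_get_of_lt (a := ⟨i, hi⟩) (b := ⟨j, hj⟩) h

lemma getD_pos (l : List ℕ) (hl : IsPartition l) {i : ℕ} (hi : i < l.length) :
    0 < l.getD i 0 := by
  rw [List.getD_eq_getElem l 0 hi]
  exact hl.2 _ (List.getElem_mem hi)

lemma bVal_strictAnti (l : List ℕ) (hl : l.Pairwise (· ≥ ·)) {i j : ℕ} (hij : i < j)
    (hj : j < l.length) : bVal l j < bVal l i := by
  have := getD_anti l hl (le_of_lt hij) hj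
  unfold bVal; omega

lemma bVal_le_zero (l : List ℕ) (hl : l.Pairwise (· ≥ ·)) {k : ℕ} (hk : k < l.length) :
    bVal l k ≤ bVal l 0 := by
  rcases Nat.eq_zero_or_pos k with rfl | h
  · exact le_refl _
  · exact le_of_lt (bVal_strictAnti l hl h hk)

lemma hook_add_F (l : List ℕ) {i j : ℕ} (hi : i < l.length) (hj : j < l.getD i 0) :
    hook l i j + Fmap l i j = bVal l i := by
  have h1 : ((Finset.range l.length).filter fun k => i < k ∧ j < l.getD k 0)
      = ((Finset.range l.length).filter fun k => i < k).filter fun k => j < l.getD k 0 := by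
    rw [Finset.filter_filter]
  have h2 : ((Finset.range l.length).filter fun k => i < k ∧ l.getD k 0 ≤ j)
      = ((Finset.range l.length).filter fun k => i < k).filter fun k => ¬ (j < l.getD k 0) := by
    rw [Finset.filter_filter]
    exact Finset.filter_congr (fun k _ => by simp [Nat.not_lt])
  have h3 : ((Finset.range l.length).filter fun k => i < k) = Finset.Ioo i l.length := by
    ext k; simp [Finset.mem_Ioo, and_comm]
  have hsplit : (((Finset.range l.length).filter fun k => i < k ∧ j < l.getD k 0)).card
      + (((Finset.range l.length).filter fun k => i < k ∧ l.getD k 0 ≤ j)).card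
      = l.length - i - 1 := by
    rw [h1, h2, Finset.card_filter_add_card_filter_not, h3, Nat.card_Ioo]
  unfold hook Fmap bVal
  omega

lemma Fmap_strictMono (l : List ℕ) (i : ℕ) : StrictMono (Fmap l i) := by
  intro j j' h
  unfold Fmap
  have : (((Finset.range l.length).filter fun k => i < k ∧ l.getD k 0 ≤ j)).card
      ≤ (((Finset.range l.length).filter fun k => i < k ∧ l.getD k 0 ≤ j')).card := by
    apply Finset.card_le_card
    apply Finset.monotone_filter_right
    intro k _ hkk
    exact ⟨hkk.1, le_trans hkk.2 (le_of_lt h)⟩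
  omega

lemma F_lt_b (l : List ℕ) {i j : ℕ} (hi : i < l.length) (hj : j < l.getD i 0) :
    Fmap l i j < bVal l i := by
  have hsub : ((Finset.range l.length).filter fun k => i < k ∧ l.getD k 0 ≤ j)
      ⊆ Finset.Ioo i l.length := by
    intro k hk
    simp only [Finset.mem_filter, Finset.mem_range] at hk
    simp [Finset.mem_Ioo]; exact ⟨hk.2.1, hk.1⟩
  have := Finset.card_le_card hsub
  rw [Nat.card_Ioo] at this
  unfold Fmap bVal
  omega

lemma F_ne_b (l : List ℕ) (hl : l.Pairwise (· ≥ ·)) {i k : ℕ} (hik : i < k)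
    (hk : k < l.length) (j : ℕ) : Fmap l i j ≠ bVal l k := by
  by_cases hc : l.getD k 0 ≤ j
  · have hsub : Finset.Ico k l.length
        ⊆ ((Finset.range l.length).filter fun k' => i < k' ∧ l.getD k' 0 ≤ j) := by
      intro k' hk'
      simp only [Finset.mem_Ico] at hk'
      simp only [Finset.mem_filter, Finset.mem_range]
      exact ⟨hk'.2, lt_of_lt_of_le hik hk'.1, le_trans (getD_anti l hl hk'.1 hk'.2) hc⟩
    have := Finset.card_le_card hsub
    rw [Nat.card_Ico] at this
    unfold Fmap bVal
    omega
  · push_neg at hc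
    have hsub : ((Finset.range l.length).filter fun k' => i < k' ∧ l.getD k' 0 ≤ j)
        ⊆ Finset.Ioo k l.length := by
      intro k' hk'
      simp only [Finset.mem_filter, Finset.mem_range] at hk'
      simp only [Finset.mem_Ioo]
      refine ⟨?_, hk'.1⟩
      by_contra hle
      push_neg at hle
      have := getD_anti l hl hle hk
      omega
    have := Finset.card_le_card hsub
    rw [Nat.card_Ioo] at this
    unfold Fmap bVal
    omega

lemma F_image (l : List ℕ) (hl : l.Pairwise (· ≥ ·)) {i : ℕ} (hi : i < l.length) :
    (Finset.range (l.getD i 0)).image (Fmap l i)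
      = Finset.range (bVal l i) \ ((Finset.Ioo i l.length).image (bVal l)) := by
  have hsub : (Finset.range (l.getD i 0)).image (Fmap l i)
      ⊆ Finset.range (bVal l i) \ ((Finset.Ioo i l.length).image (bVal l)) := by
    intro x hx
    simp only [Finset.mem_image, Finset.mem_range] at hx
    obtain ⟨j, hj, rfl⟩ := hx
    simp only [Finset.mem_sdiff, Finset.mem_range, Finset.mem_image, Finset.mem_Ioo, not_exists]
    refine ⟨F_lt_b l hi hj, ?_⟩
    intro k hik
    exact F_ne_b l hl hik.1.1 hik.1.2 j hik.2.symm

  apply Finset.eq_of_subset_of_card_le hsub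
  have hc1 : ((Finset.range (l.getD i 0)).image (Fmap l i)).card = l.getD i 0 := by
    rw [Finset.card_image_of_injective _ (Fmap_strictMono l i).injective, Finset.card_range]
  have himsub : (Finset.Ioo i l.length).image (bVal l) ⊆ Finset.range (bVal l i) := by
    intro x hx
    simp only [Finset.mem_image, Finset.mem_Ioo] at hx
    obtain ⟨k, ⟨hik, hk⟩, rfl⟩ := hx
    simpa [Finset.mem_range] using bVal_strictAnti l hl hik hk
  have hinj : Set.InjOn (bVal l) (Finset.Ioo i l.length) := by
    intro a ha b hb hab
    simp only [Finset.coe_Ioo, Set.mem_Ioo] at ha hb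
    rcases lt_trichotomy a b with h | h | h
    · have := bVal_strictAnti l hl h hb.2; omega
    · exact h
    · have := bVal_strictAnti l hl h ha.2; omega
  have hc2 : ((Finset.Ioo i l.length).image (bVal l)).card = l.length - 1 - i := by
    rw [Finset.card_image_of_injOn hinj, Nat.card_Ioo]; omega
  rw [Finset.card_sdiff_of_subset himsub, hc1, hc2, Finset.card_range]
  unfold bVal
  omega

lemma row_count (l : List ℕ) (hl : l.Pairwise (· ≥ ·)) {i : ℕ} (hi : i < l.length) (v : ℕ) :
    ((Finset.range (l.getD i 0)).filter fun j => hook l i j = v).card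
      = if v ≤ bVal l i ∧ ∀ k ∈ Finset.range l.length, bVal l k + v ≠ bVal l i
        then 1 else 0 := by
  have hfeq : ((Finset.range (l.getD i 0)).filter fun j => hook l i j = v)
      = ((Finset.range (l.getD i 0)).filter fun j => Fmap l i j + v = bVal l i) := by
    apply Finset.filter_congr
    intro j hj
    have hj' := Finset.mem_range.mp hj
    have := hook_add_F l hi hj'
    omega
  rw [hfeq]
  split
  case isTrue h =>
    obtain ⟨hv, hall⟩ := h
    have hv1 : 1 ≤ v := by
      have := hall i (Finset.mem_range.mpr hi)
      omega
    have hmem : bVal l i - v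
        ∈ Finset.range (bVal l i) \ ((Finset.Ioo i l.length).image (bVal l)) := by
      simp only [Finset.mem_sdiff, Finset.mem_range, Finset.mem_image, Finset.mem_Ioo,
        not_exists]
      constructor
      · omega
      · intro k hk
        have := hall k (Finset.mem_range.mpr hk.1.2)
        omega
    rw [← F_image l hl hi] at hmem
    obtain ⟨j, hj, hFj⟩ := Finset.mem_image.mp hmem
    apply Finset.card_eq_one.mpr
    refine ⟨j, ?_⟩
    ext j'
    simp only [Finset.mem_filter, Finset.mem_range, Finset.mem_singleton]
    constructor
    · rintro ⟨hj', hF'⟩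
      have hFjv : Fmap l i j + v = bVal l i := by omega
      have : Fmap l i j' = Fmap l i j := by omega
      exact (Fmap_strictMono l i).injective this
    · rintro rfl
      exact ⟨Finset.mem_range.mp hj, by omega⟩
  case isFalse h =>
    rw [Finset.card_eq_zero.mpr]
    rw [Finset.filter_eq_empty_iff]
    intro j hj hF
    have hj' := Finset.mem_range.mp hj
    apply h
    refine ⟨by omega, ?_⟩
    intro k hk heq
    have hk' := Finset.mem_range.mp hk
    have hFk : Fmap l i j = bVal l k := by omega
    rcases lt_trichotomy i k with hik | rfl | hki
    · exact F_ne_b l hl hik hk' j hFk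
    · have := F_lt_b l hi hj'
      omega
    · have := bVal_strictAnti l hl hki hi
      omega

def gCount (l : List ℕ) (v : ℕ) : ℕ :=
  ((Finset.range l.length).filter fun i =>
    v ≤ bVal l i ∧ ∀ k ∈ Finset.range l.length, bVal l k + v ≠ bVal l i).card

lemma count_filter_range (c : ℕ) (p : ℕ → Prop) [DecidablePred p] :
    ((Multiset.range c).filter p).card = ((Finset.range c).filter p).card := by
  rfl

lemma count_hookMultiset (l : List ℕ) (hl : l.Pairwise (· ≥ ·)) (v : ℕ) :
    (hookMultiset l).count v = gCount l v := by
  unfold hookMultiset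
  have hcoe : (↑((List.range l.length).flatMap fun i =>
        (List.range (l.getD i 0)).map fun j => hook l i j) : Multiset ℕ)
      = (Multiset.range l.length).bind
          fun i => (Multiset.range (l.getD i 0)).map fun j => hook l i j := by
    rw [show ((List.range l.length).flatMap fun i =>
        (List.range (l.getD i 0)).map fun j => hook l i j)
      = (List.range l.length).flatMap (fun i =>
        (List.range (l.getD i 0)).map fun j => hook l i j) from rfl]
    rw [← Multiset.coe_bind]
    rfl
  rw [hcoe, Multiset.count_bind]
  have : gCount l v = (Finset.range l.length).sum
      (fun i => if v ≤ bVal l i ∧ ∀ k ∈ Finset.range l.length, bVal l k + v ≠ bVal l i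
        then 1 else 0) := by
    rw [gCount, Finset.card_filter]
  rw [this]
  rw [Finset.sum_eq_multiset_sum]
  congr 1
  rw [show (Finset.range l.length).val = Multiset.range l.length from rfl]
  apply Multiset.map_congr rfl
  intro i hi
  have hi' : i < l.length := by
    rwa [Multiset.mem_range] at hi
  rw [← row_count l hl hi' v]
  rw [Multiset.count_map]
  rw [show ((Finset.range (l.getD i 0)).filter fun j => hook l i j = v).card
      = ((Multiset.range (l.getD i 0)).filter (fun j => hook l i j = v)).card from rfl]
  congr 1
  apply Multiset.filter_congr
  intro j _
  exact eq_comm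

lemma bump_length (l : List ℕ) (p n : ℕ) (hpl : p ≤ l.length) :
    (bump l p n).length = l.length := by
  simp [bump]
  omega

lemma bump_getD (l : List ℕ) (p n : ℕ) (hpl : p ≤ l.length) {i : ℕ} (hi : i < l.length) :
    (bump l p n).getD i 0 = if i < p then l.getD i 0 + n else l.getD i 0 := by
  have hlen : ((l.take p).map fun v => v + n).length = p := by
    simp; omega
  show ((((l.take p).map fun v => v + n) ++ l.drop p).getD i 0) = _
  split
  case isTrue h =>
    rw [List.getD_append _ _ _ _ (by omega)]
    rw [List.getD_eq_getElem _ 0 (by simp; omega), List.getD_eq_getElem l 0 hi]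
    simp [List.getElem_take]
  case isFalse h =>
    push_neg at h
    rw [List.getD_append_right _ _ _ _ (by omega)]
    rw [List.getD_eq_getElem _ 0 (by simp; omega), List.getD_eq_getElem l 0 hi]
    rw [List.getElem_drop]
    congr 1
    simp
    omega

lemma bump_sorted (l : List ℕ) (p n : ℕ) (hl : l.Pairwise (· ≥ ·)) (hpl : p ≤ l.length) :
    (bump l p n).Pairwise (· ≥ ·) := by
  rw [List.pairwise_iff_getElem]
  intro a b ha hb hab
  rw [bump_length l p n hpl] at ha hb
  have hga : (bump l p n)[a] = (bump l p n).getD a 0 := by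
    rw [List.getD_eq_getElem _ 0 (by rw [bump_length l p n hpl]; exact ha)]
  have hgb : (bump l p n)[b] = (bump l p n).getD b 0 := by
    rw [List.getD_eq_getElem _ 0 (by rw [bump_length l p n hpl]; exact hb)]
  rw [hga, hgb, bump_getD l p n hpl ha, bump_getD l p n hpl hb]
  have hmono := getD_anti l hl (le_of_lt hab) hb
  split <;> split <;> omega

lemma bump_pos (l : List ℕ) (p n : ℕ) (hl : IsPartition l) (hpl : p ≤ l.length) :
    ∀ x ∈ bump l p n, 0 < x := by
  intro x hx
  rw [List.mem_iff_getElem] at hx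
  obtain ⟨i, hi, rfl⟩ := hx
  rw [bump_length l p n hpl] at hi
  rw [show (bump l p n)[i] = (bump l p n).getD i 0 from
    (List.getD_eq_getElem _ 0 (by rw [bump_length l p n hpl]; exact hi)).symm]
  rw [bump_getD l p n hpl hi]
  have := getD_pos l hl hi
  split <;> omega

lemma bump_bVal (l : List ℕ) (p n : ℕ) (hpl : p ≤ l.length) {i : ℕ} (hi : i < l.length) :
    bVal (bump l p n) i = if i < p then bVal l i + n else bVal l i := by
  unfold bVal
  rw [bump_length l p n hpl, bump_getD l p n hpl hi]
  split <;> omega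

lemma drop_sorted (l : List ℕ) (p : ℕ) (hl : l.Pairwise (· ≥ ·)) :
    (l.drop p).Pairwise (· ≥ ·) := hl.drop

lemma drop_pos (l : List ℕ) (p : ℕ) (hl : IsPartition l) : ∀ x ∈ l.drop p, 0 < x :=
  fun x hx => hl.2 x (List.mem_of_mem_drop hx)

lemma drop_getD (l : List ℕ) (p : ℕ) {i : ℕ} (hi : i < l.length - p) :
    (l.drop p).getD i 0 = l.getD (p + i) 0 := by
  rw [List.getD_eq_getElem _ 0 (by simp; omega), List.getD_eq_getElem _ 0 (by omega)]
  rw [List.getElem_drop]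

lemma drop_bVal (l : List ℕ) (p : ℕ) {i : ℕ} (hi : i < l.length - p) :
    bVal (l.drop p) i = bVal l (p + i) := by
  unfold bVal
  rw [List.length_drop, drop_getD l p hi]
  omega



def dCount (l : List ℕ) (p v : ℕ) : ℕ :=
  ∑ i ∈ Finset.range p, ((Finset.range p).filter fun j => i < j ∧ bVal l i = bVal l j + v).card

lemma fs_length (l : List ℕ) (p : ℕ) (hpl : p ≤ l.length) :
    (frontSection l p).length = p := by
  simp [frontSection]; omega

lemma fs_getD (l : List ℕ) (p : ℕ) (hpl : p ≤ l.length) {i : ℕ} (hi : i < p) :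
    (frontSection l p).getD i 0 = l.getD i 0 + 1 - l.getD (p - 1) 0 := by
  unfold frontSection
  rw [List.getD_eq_getElem _ 0 (by simp; omega)]
  simp only [List.getElem_map, List.getElem_take]
  rw [List.getD_eq_getElem l 0 (show i < l.length by omega)]

lemma fs_pos (l : List ℕ) (p : ℕ) (hl : l.Pairwise (· ≥ ·)) (hp : 0 < p) (hpl : p ≤ l.length)
    {k : ℕ} (hk : k < p) : 0 < (frontSection l p).getD k 0 := by
  rw [fs_getD l p hpl hk]
  have := getD_anti l hl (show k ≤ p - 1 by omega) (show p - 1 < l.length by omega)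
  omega

lemma ch_length (l : List ℕ) (p : ℕ) (hpl : p ≤ l.length) :
    (charList (frontSection l p)).length = p := by
  simp [charList, fs_length l p hpl]

lemma ch_getD (l : List ℕ) (p : ℕ) (hl : l.Pairwise (· ≥ ·)) (hp : 0 < p) (hpl : p ≤ l.length)
    {i : ℕ} (hi : i < p) :
    (charList (frontSection l p)).getD i 0
      = (frontSection l p).getD i 0 + (p - 1 - i) := by
  unfold charList
  rw [List.getD_eq_getElem _ 0 (by simp [fs_length l p hpl]; omega)]
  rw [List.getElem_map, List.getElem_range]
  unfold hook
  rw [fs_length l p hpl]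
  have hfil : ((Finset.range p).filter fun k => i < k ∧ 0 < (frontSection l p).getD k 0)
      = Finset.Ioo i p := by
    ext k
    simp only [Finset.mem_filter, Finset.mem_range, Finset.mem_Ioo]
    constructor
    · rintro ⟨hk, hik, _⟩; exact ⟨hik, hk⟩
    · rintro ⟨hik, hk⟩; exact ⟨hk, hik, fs_pos l p hl hp hpl hk⟩
  rw [hfil, Nat.card_Ioo]
  omega

lemma chb (l : List ℕ) (p : ℕ) (hl : l.Pairwise (· ≥ ·)) (hp : 0 < p) (hpl : p ≤ l.length)
    {i : ℕ} (hi : i < p) :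
    (charList (frontSection l p)).getD i 0 + bVal l (p - 1) = bVal l i + 1 := by
  rw [ch_getD l p hl hp hpl hi, fs_getD l p hpl hi]
  have h1 := getD_anti l hl (show i ≤ p - 1 by omega) (show p - 1 < l.length by omega)
  unfold bVal
  omega

lemma count_missingHooks (l : List ℕ) (p : ℕ) (hl : l.Pairwise (· ≥ ·)) (hp : 0 < p)
    (hpl : p ≤ l.length) (v : ℕ) :
    (listDiffs (charList (frontSection l p))).count v = dCount l p v := by
  set ch := charList (frontSection l p) with hch
  have hlen : ch.length = p := ch_length l p hpl
  unfold listDiffs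
  rw [hlen]
  have hcoe : (↑((List.range p).flatMap fun i =>
        ((List.range p).filter fun j => decide (i < j)).map fun j => ch.getD i 0 - ch.getD j 0)
        : Multiset ℕ)
      = (Multiset.range p).bind (fun i =>
          ((Multiset.range p).filter fun j => i < j).map fun j => ch.getD i 0 - ch.getD j 0) := by
    rw [show ((List.range p).flatMap fun i =>
        ((List.range p).filter fun j => decide (i < j)).map fun j => ch.getD i 0 - ch.getD j 0)
      = (List.range p).flatMap (fun i =>
        ((List.range p).filter fun j => decide (i < j)).map
          fun j => ch.getD i 0 - ch.getD j 0) from rfl]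
    rw [← Multiset.coe_bind]
    rfl
  rw [hcoe, Multiset.count_bind]
  rw [show dCount l p v = (Finset.range p).sum
      (fun i => ((Finset.range p).filter fun j => i < j ∧ bVal l i = bVal l j + v).card)
    from rfl]
  rw [Finset.sum_eq_multiset_sum]
  congr 1
  rw [show (Finset.range p).val = Multiset.range p from rfl]
  apply Multiset.map_congr rfl
  intro i hi
  have hi' : i < p := by rwa [Multiset.mem_range] at hi
  rw [Multiset.count_map]
  rw [Multiset.filter_filter]
  rw [show ∀ (q : ℕ → Prop) (_ : DecidablePred q),
      ((Multiset.range p).filter q).card = ((Finset.range p).filter q).card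
    from fun q _ => rfl]
  apply congrArg
  apply Finset.filter_congr
  intro j hj
  have hj' : j < p := Finset.mem_range.mp hj
  constructor
  · rintro ⟨heq, hij⟩
    have e1 := chb l p hl hp hpl hi'
    have e2 := chb l p hl hp hpl hj'
    rw [← hch] at e1 e2
    have hlt := bVal_strictAnti l hl hij (lt_of_lt_of_le hj' hpl)
    exact ⟨hij, by omega⟩
  · rintro ⟨hij, heq⟩
    have e1 := chb l p hl hp hpl hi'
    have e2 := chb l p hl hp hpl hj'
    rw [← hch] at e1 e2
    have hlt := bVal_strictAnti l hl hij (lt_of_lt_of_le hj' hpl)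
    exact ⟨by omega, hij⟩
lemma gCount_zero (l : List ℕ) : gCount l 0 = 0 := by
  unfold gCount
  rw [Finset.card_eq_zero.mpr]
  rw [Finset.filter_eq_empty_iff]
  intro i hi h
  exact h.2 i hi (by omega)

lemma dCount_zero (l : List ℕ) (p : ℕ) (hl : l.Pairwise (· ≥ ·)) (hpl : p ≤ l.length) :
    dCount l p 0 = 0 := by
  unfold dCount
  apply Finset.sum_eq_zero
  intro i hi
  rw [Finset.card_eq_zero.mpr]
  rw [Finset.filter_eq_empty_iff]
  intro j hj h
  have := bVal_strictAnti l hl h.1 (lt_of_lt_of_le (Finset.mem_range.mp hj) hpl)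
  omega

lemma dCount_if (l : List ℕ) (p v : ℕ) (hl : l.Pairwise (· ≥ ·)) (hpl : p ≤ l.length)
    (hv : 1 ≤ v) {i : ℕ} (hi : i < p) :
    ((Finset.range p).filter fun j => i < j ∧ bVal l i = bVal l j + v).card
      = if ∀ k ∈ Finset.range p, bVal l k + v ≠ bVal l i then 0 else 1 := by
  split
  case isTrue hQ =>
    rw [Finset.card_eq_zero.mpr]
    rw [Finset.filter_eq_empty_iff]
    intro j hj h
    exact hQ j hj (by omega)
  case isFalse hQ =>
    push_neg at hQ
    obtain ⟨k, hk, hkv⟩ := hQ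
    have hk' : k < p := Finset.mem_range.mp hk
    have hik : i < k := by
      by_contra hle
      push_neg at hle
      rcases eq_or_lt_of_le hle with rfl | hlt
      · omega
      · have := bVal_strictAnti l hl hlt (lt_of_lt_of_le hi hpl)
        omega
    apply Finset.card_eq_one.mpr
    refine ⟨k, ?_⟩
    ext j
    simp only [Finset.mem_filter, Finset.mem_range, Finset.mem_singleton]
    constructor
    · rintro ⟨hj, hij, heq⟩
      rcases lt_trichotomy j k with h | h | h
      · have := bVal_strictAnti l hl h (lt_of_lt_of_le hk' hpl)
        omega
      · exact h
      · have := bVal_strictAnti l hl h (lt_of_lt_of_le hj hpl)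
        omega
    · rintro rfl
      exact ⟨hk', hik, by omega⟩

lemma gCount_bump (l : List ℕ) (p : ℕ) (hl : IsPartition l) (hp : 0 < p)
    (hpl : p < l.length) (v n : ℕ) (hv : 1 ≤ v) (hn : bVal l 0 + v + 1 ≤ n) :
    gCount (bump l p n) v + dCount l p v = p + gCount (l.drop p) v := by
  have hpl' : p ≤ l.length := le_of_lt hpl
  have hlen : (bump l p n).length = l.length := bump_length l p n hpl'
  have hb0 : ∀ k < l.length, bVal l k ≤ bVal l 0 := fun k hk => bVal_le_zero l hl.1 hk
  unfold gCount
  simp only [hlen]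
  have hsplit : Finset.range l.length = Finset.range p ∪ Finset.Ico p l.length := by
    rw [Finset.range_eq_Ico, Finset.range_eq_Ico]
    exact (Finset.Ico_union_Ico_eq_Ico (Nat.zero_le p) hpl').symm
  have hdisj : Disjoint (Finset.range p) (Finset.Ico p l.length) := by
    rw [Finset.disjoint_left]
    intro a ha hb
    rw [Finset.mem_range] at ha
    rw [Finset.mem_Ico] at hb
    omega
  rw [hsplit, Finset.filter_union,
    Finset.card_union_of_disjoint (Finset.disjoint_filter_filter hdisj)]
  -- top part
  have htop : ((Finset.range p).filter fun i =>
        v ≤ bVal (bump l p n) i ∧ ∀ k ∈ Finset.range p ∪ Finset.Ico p l.length,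
          bVal (bump l p n) k + v ≠ bVal (bump l p n) i).card
      = ((Finset.range p).filter fun i =>
          ∀ k ∈ Finset.range p, bVal l k + v ≠ bVal l i).card := by
    apply congrArg
    apply Finset.filter_congr
    intro i hi
    have hi' : i < p := Finset.mem_range.mp hi
    have hbi := bump_bVal l p n hpl' (lt_of_lt_of_le hi' hpl')
    rw [if_pos hi'] at hbi
    constructor
    · rintro ⟨_, hall⟩ k hk
      have hk' : k < p := Finset.mem_range.mp hk
      have hbk := bump_bVal l p n hpl' (lt_of_lt_of_le hk' hpl')
      rw [if_pos hk'] at hbk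
      have := hall k (by rw [← hsplit]; exact Finset.mem_range.mpr (lt_of_lt_of_le hk' hpl'))
      omega
    · intro hall
      refine ⟨by omega, ?_⟩
      intro k hk
      rw [← hsplit, Finset.mem_range] at hk
      have hbk := bump_bVal l p n hpl' hk
      by_cases hkp : k < p
      · rw [if_pos hkp] at hbk
        have := hall k (Finset.mem_range.mpr hkp)
        omega
      · rw [if_neg hkp] at hbk
        have := hb0 k hk
        omega
  rw [htop]
  -- bottom part
  have hbot : ((Finset.Ico p l.length).filter fun i =>
        v ≤ bVal (bump l p n) i ∧ ∀ k ∈ Finset.range p ∪ Finset.Ico p l.length,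
          bVal (bump l p n) k + v ≠ bVal (bump l p n) i).card
      = gCount (l.drop p) v := by
    unfold gCount
    rw [List.length_drop]
    apply Finset.card_bij' (fun i _ => i - p) (fun i' _ => p + i')
    · intro i hi
      simp only [Finset.mem_filter, Finset.mem_Ico] at hi
      obtain ⟨⟨hpi, hit⟩, hvv, hall⟩ := hi
      have hbi := bump_bVal l p n hpl' hit
      rw [if_neg (by omega)] at hbi
      have hdb : bVal (l.drop p) (i - p) = bVal l i := by
        rw [drop_bVal l p (by omega)]
        congr 1
        omega
      simp only [Finset.mem_filter, Finset.mem_range]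
      refine ⟨by omega, by omega, ?_⟩
      intro k' hk'
      have hdk : bVal (l.drop p) k' = bVal l (p + k') := drop_bVal l p hk'
      have := hall (p + k') (by rw [← hsplit, Finset.mem_range]; omega)
      have hbk := bump_bVal l p n hpl' (show p + k' < l.length by omega)
      rw [if_neg (by omega)] at hbk
      omega
    · intro i' hi'
      simp only [Finset.mem_filter, Finset.mem_range] at hi'
      obtain ⟨hi'p, hvv, hall⟩ := hi'
      have hdb : bVal (l.drop p) i' = bVal l (p + i') := drop_bVal l p hi'p
      simp only [Finset.mem_filter, Finset.mem_Ico]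
      have hbi := bump_bVal l p n hpl' (show p + i' < l.length by omega)
      rw [if_neg (by omega)] at hbi
      refine ⟨⟨by omega, by omega⟩, by omega, ?_⟩
      intro k hk
      rw [← hsplit, Finset.mem_range] at hk
      have hbk := bump_bVal l p n hpl' hk
      by_cases hkp : k < p
      · rw [if_pos hkp] at hbk
        have := hb0 k hk
        have := hb0 (p + i') (by omega)
        omega
      · rw [if_neg hkp] at hbk
        have := hall (k - p) (by omega)
        have hdk : bVal (l.drop p) (k - p) = bVal l (p + (k - p)) :=
          drop_bVal l p (by omega)
        rw [show p + (k - p) = k by omega] at hdk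
        omega
    · intro i hi
      simp only [Finset.mem_filter, Finset.mem_Ico] at hi
      omega
    · intro i' _
      omega
  unfold gCount at hbot
  rw [hbot]
  -- combine top with dCount
  have htd : ((Finset.range p).filter fun i =>
        ∀ k ∈ Finset.range p, bVal l k + v ≠ bVal l i).card + dCount l p v = p := by
    rw [Finset.card_filter]
    unfold dCount
    rw [← Finset.sum_add_distrib]
    trans (∑ _i ∈ Finset.range p, 1)
    · apply Finset.sum_congr rfl
      intro i hi
      rw [dCount_if l p v hl.1 hpl' hv (Finset.mem_range.mp hi)]
      split <;> simp
    · simp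
  omega
lemma count_missingHooks' (l : List ℕ) (p : ℕ) (hl : l.Pairwise (· ≥ ·)) (hp : 0 < p)
    (hpl : p ≤ l.length) (v : ℕ) :
    (missingHooks l p).count v = dCount l p v := by
  rw [show missingHooks l p = listDiffs (charList (frontSection l p)) from rfl]
  exact count_missingHooks l p hl hp hpl v

end Aux13

/-- In a periodic cluster, remainders are clustered iff the ∞-partitions are clustered. -/
theorem stmt13 (l m : List ℕ) (p : ℕ) (hp : 0 < p)
    (hl : IsPartition l) (hm : IsPartition m)
    (hpl : p < l.length) (hpm : p < m.length)
    (hper : ∀ n : ℕ, hookMultiset (bump l p n) = hookMultiset (bump m p n)) :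
    hookMultiset (l.drop p) = hookMultiset (m.drop p) ↔
      missingHooks l p = missingHooks m p  := by
  have hpl' : p ≤ l.length := le_of_lt hpl
  have hpm' : p ≤ m.length := le_of_lt hpm
  have hdropl : (l.drop p).Pairwise (· ≥ ·) := hl.1.drop
  have hdropm : (m.drop p).Pairwise (· ≥ ·) := hm.1.drop
  have key : ∀ v, 1 ≤ v →
      Aux13.gCount (l.drop p) v + Aux13.dCount m p v
        = Aux13.gCount (m.drop p) v + Aux13.dCount l p v := by
    intro v hv
    set n := Aux13.bVal l 0 + Aux13.bVal m 0 + v + 1 with hn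
    have h1 := Aux13.gCount_bump l p hl hp hpl v n hv (by omega)
    have h2 := Aux13.gCount_bump m p hm hp hpm v n hv (by omega)
    have h3 : Aux13.gCount (bump l p n) v = Aux13.gCount (bump m p n) v := by
      have hbl : (bump l p n).Pairwise (· ≥ ·) := Aux13.bump_sorted l p n hl.1 hpl'
      have hbm : (bump m p n).Pairwise (· ≥ ·) := Aux13.bump_sorted m p n hm.1 hpm'
      rw [← Aux13.count_hookMultiset _ hbl v, ← Aux13.count_hookMultiset _ hbm v, hper n]
    omega
  have hdl : ∀ v, (hookMultiset (l.drop p)).count v = Aux13.gCount (l.drop p) v :=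
    fun v => Aux13.count_hookMultiset _ hdropl v
  have hdm : ∀ v, (hookMultiset (m.drop p)).count v = Aux13.gCount (m.drop p) v :=
    fun v => Aux13.count_hookMultiset _ hdropm v
  have hml : ∀ v, (missingHooks l p).count v = Aux13.dCount l p v :=
    fun v => Aux13.count_missingHooks' l p hl.1 hp hpl' v
  have hmm : ∀ v, (missingHooks m p).count v = Aux13.dCount m p v :=
    fun v => Aux13.count_missingHooks' m p hm.1 hp hpm' v
  constructor
  · intro hdrop
    rw [Multiset.ext] at hdrop ⊢
    intro v
    rw [hml v, hmm v]
    rcases Nat.eq_zero_or_pos v with rfl | hv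
    · rw [Aux13.dCount_zero l p hl.1 hpl', Aux13.dCount_zero m p hm.1 hpm']
    · have hk := key v hv
      have h4 := hdrop v
      rw [hdl v, hdm v] at h4
      omega
  · intro hmiss
    rw [Multiset.ext] at hmiss ⊢
    intro v
    rw [hdl v, hdm v]
    rcases Nat.eq_zero_or_pos v with rfl | hv
    · rw [Aux13.gCount_zero, Aux13.gCount_zero]
    · have hk := key v hv
      have h4 := hmiss v
      rw [hml v, hmm v] at h4
      omega
end
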